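/- Let n ≥ 2 be an integer and let g : [0,1] → ℝ^{n−1} be a Lipschitz function. Write P(t) = (t, g(t)) ∈ ℝ^n. Then there exists a set X ⊆ [0,1] with Hausdorff dimension at least 1/2 such that for all pairwise distinct t_1, t_2, t_3 ∈ X one has ‖P(t_3) − P(t_1)‖ ≠ ‖P(t_3) − P(t_2)‖ (Euclidean norm); in particular, no three points of the graph {(t, g(t)) : t ∈ X} form the vertices of an isosceles triangle. -/

import Mathlib

open Filter Set

noncomputable section

/-- A dyadic length: a real number of the form `2 ^ (-k)` for a natural number `k`. -/
def IsDyadicLength (l : ℝ) : Prop := ∃ k : ℕ, l = (2 : ℝ) ^ (-(k : ℤ))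

/-- The half-open dyadic cube of sidelength `l` with corner `l • m`. -/
def dyadicCube {ι : Type*} (l : ℝ) (m : ι → ℤ) : Set (ι → ℝ) :=
  {x | ∀ i, l * (m i : ℝ) ≤ x i ∧ x i < l * ((m i : ℝ) + 1)}

/-- The (indices of the) cubes of `B_l` that intersect `E`. -/
def cubesMeeting {ι : Type*} (l : ℝ) (E : Set (ι → ℝ)) : Set (ι → ℤ) :=
  {m | (dyadicCube l m ∩ E).Nonempty}

/-- `#B_l(E)`, the number of cubes of sidelength `l` meeting `E`. -/
def cubeCount {ι : Type*} (l : ℝ) (E : Set (ι → ℝ)) : ℕ :=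
  (cubesMeeting l E).ncard

/-- `E` is a union of cubes of `B_l`. -/
def IsCubeUnion {ι : Type*} (l : ℝ) (E : Set (ι → ℝ)) : Prop :=
  ∃ S : Set (ι → ℤ), E = ⋃ m ∈ S, dyadicCube l m

/-- Lower Minkowski dimension, computed along dyadic scales. -/
def lowerMinkDim {ι : Type*} (Z : Set (ι → ℝ)) : ℝ :=
  Filter.atTop.liminf fun k : ℕ =>
    Real.log (cubeCount ((2 : ℝ) ^ (-(k : ℤ))) Z) / (k * Real.log 2)

/-- The unit cube `[0,1)^d`. -/
def unitCube (d : ℕ) : Set (Fin d → ℝ) := {x | ∀ i, x i ∈ Set.Ico (0 : ℝ) 1}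

/-- `X^n`, viewed inside `ℝ^{dn} = (Fin n × Fin d → ℝ)`. -/
def nthPower {d n : ℕ} (X : Set (Fin d → ℝ)) : Set (Fin n × Fin d → ℝ) :=
  {y | ∀ j, (fun i => y (j, i)) ∈ X}

/-- The point `(x_1, …, x_n) ∈ ℝ^{dn}` built from `x_1, …, x_n ∈ ℝ^d`. -/
def tuple {d n : ℕ} (x : Fin n → Fin d → ℝ) : Fin n × Fin d → ℝ := fun p => x p.1 p.2

/-- The `j`-th factor of a cube index in `B_l^{dn}`. -/
def cubeRow {d n : ℕ} (M : Fin n × Fin d → ℤ) (j : Fin n) : Fin d → ℤ := fun i => M (j, i)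

/-- A cube of `B_l^{dn}` is strongly non-diagonal if its `n` factors are pairwise distinct. -/
def StronglyNonDiagonal {d n : ℕ} (M : Fin n × Fin d → ℤ) : Prop :=
  Function.Injective (cubeRow M)

/-- The point `(t, g t) ∈ ℝ^{m+1}` on the graph of `g : ℝ → ℝ^m`. -/
def graphPoint {m : ℕ} (g : ℝ → EuclideanSpace ℝ (Fin m)) (t : ℝ) :
    EuclideanSpace ℝ (Fin (m + 1)) :=
  (WithLp.equiv 2 (Fin (m + 1) → ℝ)).symm (Fin.cons t (WithLp.equiv 2 (Fin m → ℝ) (g t)))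

open MeasureTheory
open scoped NNReal ENNReal

namespace IsoAux

/-- binary-to-ternary digit transfer: the Stanley 3AP-free numbers. -/
def stanley : ℕ → ℕ
  | 0 => 0
  | (n+1) => 3 * stanley ((n+1)/2) + (n+1) % 2
decreasing_by exact Nat.div_lt_self (Nat.succ_pos n) one_lt_two

lemma stanley_eq (n : ℕ) : stanley n = 3 * stanley (n / 2) + n % 2 := by
  cases n with
  | zero => simp [stanley]
  | succ n => rw [stanley]

lemma stanley_zero : stanley 0 = 0 := by simp [stanley]

lemma stanley_eq_zero {n : ℕ} (h : stanley n = 0) : n = 0 := by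
  by_contra hn
  induction n using Nat.strong_induction_on with
  | _ n ih =>
    rw [stanley_eq] at h
    rcases Nat.eq_zero_of_add_eq_zero_left h with h2
    have h1 : stanley (n / 2) = 0 := by omega
    have hmod : n % 2 = 0 := by omega
    rcases Nat.eq_zero_or_pos (n / 2) with h0 | hpos
    · exact hn (by omega)
    · have : n / 2 ≠ 0 := by omega
      exact ih (n / 2) (Nat.div_lt_self (by omega) one_lt_two) h1 this

lemma stanley_ap : ∀ z : ℕ, ∀ x y : ℕ, stanley x + stanley y = 2 * stanley z → x = z ∧ y = z := by
  intro z
  induction z using Nat.strong_induction_on with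
  | _ z ih =>
    intro x y h
    rw [stanley_eq x, stanley_eq y, stanley_eq z] at h
    -- digits
    have hx2 : x % 2 < 2 := Nat.mod_lt _ (by norm_num)
    have hy2 : y % 2 < 2 := Nat.mod_lt _ (by norm_num)
    have hz2 : z % 2 < 2 := Nat.mod_lt _ (by norm_num)
    have hdig : x % 2 + y % 2 = 2 * (z % 2) ∧
        stanley (x / 2) + stanley (y / 2) = 2 * stanley (z / 2) := by
      constructor <;> omega
    obtain ⟨hd, hs⟩ := hdig
    rcases Nat.eq_zero_or_pos z with hz0 | hzpos
    · subst hz0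
      simp [stanley_zero] at hs ⊢
      have hx0 : stanley (x/2) = 0 := by omega
      have hy0 : stanley (y/2) = 0 := by omega
      have := stanley_eq_zero hx0
      have := stanley_eq_zero hy0
      omega
    · have hrec := ih (z / 2) (Nat.div_lt_self hzpos one_lt_two) (x/2) (y/2) hs
      omega

lemma stanley_injective : Function.Injective stanley := by
  intro a b h
  have := stanley_ap b a b (by omega)
  exact this.1

lemma stanley_lt : ∀ k n : ℕ, n < 2 ^ k → stanley n < 3 ^ k := by
  intro k
  induction k with
  | zero => intro n hn; interval_cases n; simp [stanley_zero]
  | succ k ih =>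
    intro n hn
    rw [stanley_eq]
    have h2 : n / 2 < 2 ^ k := by omega
    have := ih _ h2
    have hm : n % 2 < 2 := Nat.mod_lt _ (by norm_num)
    have h3 : 3 ^ (k+1) = 3 * 3 ^ k := by ring
    omega

/-- The 3AP-free index set inside `{0, …, 65535}`. -/
def Bset : Finset ℕ := (Finset.range 512).image (fun n => 3 * stanley n)

lemma Bset_card : Bset.card = 512 := by
  rw [Bset, Finset.card_image_of_injective _ (fun a b h => stanley_injective (by omega)),
    Finset.card_range]

lemma Bset_lt {b : ℕ} (hb : b ∈ Bset) : b < 65536 := by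
  simp only [Bset, Finset.mem_image, Finset.mem_range] at hb
  obtain ⟨n, hn, rfl⟩ := hb
  have : stanley n < 3 ^ 9 := stanley_lt 9 n (by omega)
  omega

lemma Bset_gap {a b : ℕ} (ha : a ∈ Bset) (hb : b ∈ Bset) (hab : a ≠ b) :
    3 ≤ |(a : ℤ) - b| := by
  simp only [Bset, Finset.mem_image, Finset.mem_range] at ha hb
  obtain ⟨n, -, rfl⟩ := ha
  obtain ⟨n', -, rfl⟩ := hb
  have hne : stanley n ≠ stanley n' := fun h => hab (by omega)
  by_contra hlt
  push_neg at hlt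
  rw [abs_lt] at hlt
  push_cast at hlt
  omega

lemma Bset_ap {a b c : ℕ} (ha : a ∈ Bset) (hb : b ∈ Bset) (hc : c ∈ Bset) (hac : a ≠ c) :
    3 ≤ |(a : ℤ) + b - 2 * c| := by
  simp only [Bset, Finset.mem_image, Finset.mem_range] at ha hb hc
  obtain ⟨n, -, rfl⟩ := ha
  obtain ⟨n', -, rfl⟩ := hb
  obtain ⟨n'', -, rfl⟩ := hc
  by_contra hlt
  push_neg at hlt
  rw [abs_lt] at hlt
  push_cast at hlt
  have h0 : stanley n + stanley n' = 2 * stanley n'' := by omega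
  obtain ⟨h1, -⟩ := stanley_ap n'' n n' h0
  exact hac (by rw [h1])

/-! ### The subdivision scheme -/

def cellLen (ℓ₀ : ℝ) (k : ℕ) : ℝ := ℓ₀ / 65536 ^ k

lemma cellLen_pos {ℓ₀ : ℝ} (h : 0 < ℓ₀) (k : ℕ) : 0 < cellLen ℓ₀ k :=
  div_pos h (by positivity)

lemma cellLen_succ (ℓ₀ : ℝ) (k : ℕ) : cellLen ℓ₀ (k + 1) = cellLen ℓ₀ k / 65536 := by
  rw [cellLen, cellLen, pow_succ]; ring

lemma one_le_pow65536 (k : ℕ) : (1:ℝ) ≤ 65536 ^ k :=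
  one_le_pow₀ (by norm_num)

lemma cellLen_le {ℓ₀ : ℝ} (h : 0 ≤ ℓ₀) (k : ℕ) : cellLen ℓ₀ k ≤ ℓ₀ :=
  div_le_self h (one_le_pow65536 k)

lemma cellLen_antitone {ℓ₀ : ℝ} (h : 0 ≤ ℓ₀) {k l : ℕ} (hkl : k ≤ l) :
    cellLen ℓ₀ l ≤ cellLen ℓ₀ k :=
  div_le_div_of_nonneg_left h (by positivity)
    (pow_le_pow_right₀ (by norm_num) hkl)

def leftEnd (a₀ ℓ₀ : ℝ) : List ℕ → ℝ
  | [] => a₀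
  | (i :: p) => leftEnd a₀ ℓ₀ p + i * cellLen ℓ₀ (p.length + 1)

def Jset (a₀ ℓ₀ : ℝ) (p : List ℕ) : Set ℝ :=
  Icc (leftEnd a₀ ℓ₀ p) (leftEnd a₀ ℓ₀ p + cellLen ℓ₀ p.length)

def massf (A : Set ℝ) (a₀ ℓ₀ : ℝ) (p : List ℕ) : ℝ := (volume (A ∩ Jset a₀ ℓ₀ p)).toReal

lemma massf_nonneg (A : Set ℝ) (a₀ ℓ₀ : ℝ) (p : List ℕ) : 0 ≤ massf A a₀ ℓ₀ p :=
  ENNReal.toReal_nonneg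

lemma massf_le_cellLen (A : Set ℝ) {a₀ ℓ₀ : ℝ} (h : 0 < ℓ₀) (p : List ℕ) :
    massf A a₀ ℓ₀ p ≤ cellLen ℓ₀ p.length := by
  have h1 : volume (A ∩ Jset a₀ ℓ₀ p) ≤ ENNReal.ofReal (cellLen ℓ₀ p.length) := by
    calc volume (A ∩ Jset a₀ ℓ₀ p) ≤ volume (Jset a₀ ℓ₀ p) :=
      measure_mono inter_subset_right
    _ = ENNReal.ofReal (cellLen ℓ₀ p.length) := by
      rw [Jset, Real.volume_Icc]; ring_nf
  calc massf A a₀ ℓ₀ p ≤ (ENNReal.ofReal (cellLen ℓ₀ p.length)).toReal :=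
    ENNReal.toReal_mono (by simp) h1
  _ = cellLen ℓ₀ p.length := ENNReal.toReal_ofReal (le_of_lt (cellLen_pos h _))

def classIdx (τ : ℕ) : Finset ℕ :=
  (Finset.range 65536).filter (fun i => ∃ b ∈ Bset, i + 65536 = b + τ)

lemma count_tau (i : ℕ) (hi : i < 65536) :
    ((Finset.range 131072).filter (fun τ => ∃ b ∈ Bset, i + 65536 = b + τ)).card = 512 := by
  rw [← Bset_card]
  apply Finset.card_bij (fun τ _ => i + 65536 - τ)
  · intro τ hτ
    simp only [Finset.mem_filter, Finset.mem_range] at hτ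
    obtain ⟨-, b, hb, hbe⟩ := hτ
    have : i + 65536 - τ = b := by omega
    rwa [this]
  · intro τ1 h1 τ2 h2 he
    simp only [Finset.mem_filter, Finset.mem_range] at h1 h2
    obtain ⟨-, b1, hb1, he1⟩ := h1
    obtain ⟨-, b2, hb2, he2⟩ := h2
    omega
  · intro b hb
    refine ⟨i + 65536 - b, ?_, ?_⟩
    · simp only [Finset.mem_filter, Finset.mem_range]
      have := Bset_lt hb
      exact ⟨by omega, b, hb, by omega⟩
    · have := Bset_lt hb
      omega

lemma exists_tau (f : ℕ → ℝ) (hf : ∀ i, 0 ≤ f i) :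
    ∃ τ, 512 * (∑ i ∈ Finset.range 65536, f i) ≤ 131072 * ∑ i ∈ classIdx τ, f i := by
  have hkey : ∑ τ ∈ Finset.range 131072, ∑ i ∈ classIdx τ, f i
      = 512 * ∑ i ∈ Finset.range 65536, f i := by
    have h1 : ∀ τ, ∑ i ∈ classIdx τ, f i =
        ∑ i ∈ Finset.range 65536, if (∃ b ∈ Bset, i + 65536 = b + τ) then f i else 0 := by
      intro τ; rw [classIdx, Finset.sum_filter]
    simp_rw [h1]
    rw [Finset.sum_comm]
    rw [Finset.mul_sum]
    apply Finset.sum_congr rfl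
    intro i hi
    rw [← Finset.sum_filter, Finset.sum_const, count_tau i (Finset.mem_range.mp hi),
      nsmul_eq_mul]
    norm_num
  by_contra hc
  push_neg at hc
  have hlt : ∀ τ ∈ Finset.range 131072,
      ∑ i ∈ classIdx τ, f i < (512 * ∑ i ∈ Finset.range 65536, f i) / 131072 := by
    intro τ _
    have := hc τ
    linarith [this]
  have hsum := Finset.sum_lt_sum_of_nonempty (by simp : (Finset.range 131072).Nonempty) hlt
  rw [hkey, Finset.sum_const, Finset.card_range, nsmul_eq_mul] at hsum
  have : (131072:ℝ) * ((512 * ∑ i ∈ Finset.range 65536, f i) / 131072)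
      = 512 * ∑ i ∈ Finset.range 65536, f i := by
    field_simp
  push_cast at hsum
  linarith


attribute [local instance] Classical.propDecidable

variable (A : Set ℝ) (a₀ ℓ₀ : ℝ)

def tauSel (p : List ℕ) : ℕ :=
  (exists_tau (fun i => massf A a₀ ℓ₀ (i :: p)) (fun _ => massf_nonneg _ _ _ _)).choose

lemma tauSel_spec (p : List ℕ) :
    512 * (∑ i ∈ Finset.range 65536, massf A a₀ ℓ₀ (i :: p)) ≤
      131072 * ∑ i ∈ classIdx (tauSel A a₀ ℓ₀ p), massf A a₀ ℓ₀ (i :: p) :=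
  (exists_tau (fun i => massf A a₀ ℓ₀ (i :: p)) (fun _ => massf_nonneg _ _ _ _)).choose_spec

def chosen (p : List ℕ) : Finset ℕ :=
  (classIdx (tauSel A a₀ ℓ₀ p)).filter (fun i => 0 < massf A a₀ ℓ₀ (i :: p))

def Spf (p : List ℕ) : ℝ := ∑ i ∈ chosen A a₀ ℓ₀ p, massf A a₀ ℓ₀ (i :: p)

def alive : List ℕ → Prop
  | [] => True
  | (i :: p) => i ∈ chosen A a₀ ℓ₀ p ∧ alive p

def wfn : List ℕ → ℝ
  | [] => 1
  | (i :: p) =>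
      if i ∈ chosen A a₀ ℓ₀ p then wfn p * massf A a₀ ℓ₀ (i :: p) / Spf A a₀ ℓ₀ p else 0

def offf : List ℕ → ℝ
  | [] => 0
  | (i :: p) => offf p + ∑ j ∈ (chosen A a₀ ℓ₀ p).filter (· < i), wfn A a₀ ℓ₀ (j :: p)

def Xset : Set ℝ :=
  {x | ∀ k, ∃ p : List ℕ, p.length = k ∧ alive A a₀ ℓ₀ p ∧ x ∈ Jset a₀ ℓ₀ p}

variable {A a₀ ℓ₀}

lemma alive_nil : alive A a₀ ℓ₀ [] := trivial

lemma alive_cons {i : ℕ} {p : List ℕ} :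
    alive A a₀ ℓ₀ (i :: p) ↔ i ∈ chosen A a₀ ℓ₀ p ∧ alive A a₀ ℓ₀ p := Iff.rfl

lemma chosen_pos {i : ℕ} {p : List ℕ} (h : i ∈ chosen A a₀ ℓ₀ p) :
    0 < massf A a₀ ℓ₀ (i :: p) := (Finset.mem_filter.mp h).2

lemma chosen_class {i : ℕ} {p : List ℕ} (h : i ∈ chosen A a₀ ℓ₀ p) :
    ∃ b ∈ Bset, i + 65536 = b + tauSel A a₀ ℓ₀ p := by
  have := (Finset.mem_filter.mp h).1
  exact (Finset.mem_filter.mp this).2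

lemma chosen_lt {i : ℕ} {p : List ℕ} (h : i ∈ chosen A a₀ ℓ₀ p) : i < 65536 := by
  have := (Finset.mem_filter.mp h).1
  exact Finset.mem_range.mp (Finset.mem_filter.mp this).1

lemma chosen_gap {i j : ℕ} {p : List ℕ} (hi : i ∈ chosen A a₀ ℓ₀ p)
    (hj : j ∈ chosen A a₀ ℓ₀ p) (hij : i ≠ j) : 3 ≤ |(i : ℤ) - j| := by
  obtain ⟨b, hb, hbe⟩ := chosen_class hi
  obtain ⟨b', hb', hbe'⟩ := chosen_class hj
  have hne : b ≠ b' := by omega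
  have h3 := Bset_gap hb hb' hne
  have heq : (i : ℤ) - j = (b : ℤ) - b' := by push_cast; omega
  rwa [heq]

lemma chosen_ap3 {a b c : ℕ} {p : List ℕ} (ha : a ∈ chosen A a₀ ℓ₀ p)
    (hb : b ∈ chosen A a₀ ℓ₀ p) (hc : c ∈ chosen A a₀ ℓ₀ p)
    (hne : ¬(a = b ∧ a = c)) : 3 ≤ |(a : ℤ) + b - 2 * c| := by
  by_cases hab : a = b
  · subst hab
    have hac : a ≠ c := fun h => hne ⟨rfl, h⟩
    have := chosen_gap ha hc hac
    have h2 : (a : ℤ) + a - 2 * c = 2 * ((a : ℤ) - c) := by ring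
    rw [h2, abs_mul]
    rw [show |(2:ℤ)| = 2 by norm_num]
    linarith [chosen_gap ha hc hac]
  · by_cases hca : c = a
    · subst hca
      have := chosen_gap hb ha (fun h => hab h.symm)
      have heq : |(c : ℤ) + b - 2 * c| = |(b : ℤ) - c| := by ring_nf
      rw [heq, abs_sub_comm]
      rw [abs_sub_comm] at this
      linarith
    · by_cases hcb : c = b
      · subst hcb
        have := chosen_gap ha hc hab
        have heq : |(a : ℤ) + c - 2 * c| = |(a : ℤ) - c| := by ring_nf
        rw [heq]; exact this
      · obtain ⟨β, hβ, hβe⟩ := chosen_class ha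
        obtain ⟨β', hβ', hβe'⟩ := chosen_class hb
        obtain ⟨β'', hβ'', hβe''⟩ := chosen_class hc
        have hβne : β ≠ β'' := by omega
        have h3 := Bset_ap hβ hβ' hβ'' hβne
        have heq : (a : ℤ) + b - 2 * c = (β : ℤ) + β' - 2 * β'' := by push_cast; omega
        rwa [heq]

lemma cellLen_succ' (ℓ₀ : ℝ) (k : ℕ) : cellLen ℓ₀ k = 65536 * cellLen ℓ₀ (k + 1) := by
  rw [cellLen_succ]; ring

lemma length_cons (i : ℕ) (p : List ℕ) : (i :: p).length = p.length + 1 := rfl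

lemma leftEnd_cons (i : ℕ) (p : List ℕ) :
    leftEnd a₀ ℓ₀ (i :: p) = leftEnd a₀ ℓ₀ p + i * cellLen ℓ₀ (p.length + 1) := rfl

lemma Jset_cons_subset (hℓ : 0 < ℓ₀) {i : ℕ} (hi : i < 65536) (p : List ℕ) :
    Jset a₀ ℓ₀ (i :: p) ⊆ Jset a₀ ℓ₀ p := by
  have hu := cellLen_pos hℓ (p.length + 1)
  intro x hx
  obtain ⟨h1, h2⟩ := hx
  simp only [leftEnd_cons, List.length_cons] at h1 h2
  rw [Jset, Set.mem_Icc]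
  constructor
  · have : (0:ℝ) ≤ i * cellLen ℓ₀ (p.length + 1) := by positivity
    linarith
  · have hle : (i : ℝ) + 1 ≤ 65536 := by
      have : (i : ℝ) ≤ 65535 := by exact_mod_cast Nat.le_of_lt_succ hi
      linarith
    have := cellLen_succ' ℓ₀ p.length
    nlinarith

lemma massf_pos (hm0 : 0 < massf A a₀ ℓ₀ []) {p : List ℕ} (hp : alive A a₀ ℓ₀ p) :
    0 < massf A a₀ ℓ₀ p := by
  cases p with
  | nil => exact hm0
  | cons i p => exact chosen_pos hp.1

lemma Jset_cover (hℓ : 0 < ℓ₀) (p : List ℕ) :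
    Jset a₀ ℓ₀ p ⊆ ⋃ i ∈ Finset.range 65536, Jset a₀ ℓ₀ (i :: p) := by
  intro x hx
  obtain ⟨h1, h2⟩ := hx
  set L := leftEnd a₀ ℓ₀ p
  set u := cellLen ℓ₀ (p.length + 1) with hu_def
  have hu : 0 < u := cellLen_pos hℓ _
  have hM : cellLen ℓ₀ p.length = 65536 * u := cellLen_succ' ℓ₀ p.length
  have ht0 : 0 ≤ (x - L) / u := by
    apply div_nonneg _ (le_of_lt hu); linarith
  set i : ℕ := min ⌊(x - L) / u⌋₊ 65535 with hi_def
  have hi : i < 65536 := by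
    have : i ≤ 65535 := min_le_right _ _
    omega
  refine mem_biUnion (Finset.mem_coe.mpr (Finset.mem_range.mpr hi)) ?_
  have hxL2 : x - L ≤ 65536 * u := by linarith
  by_cases hcase : (x - L) / u < 65536
  · have hfl : ⌊(x - L) / u⌋₊ ≤ 65535 := by
      have hlt : ⌊(x - L) / u⌋₊ < 65536 := by
        rw [Nat.floor_lt ht0]; exact_mod_cast hcase
      omega
    have hieq : i = ⌊(x - L) / u⌋₊ := by omega
    have hlow : (i : ℝ) ≤ (x - L) / u := by
      rw [hieq]; exact Nat.floor_le ht0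
    have hhigh : (x - L) / u < i + 1 := by
      rw [hieq]; exact Nat.lt_floor_add_one _
    rw [Jset, Set.mem_Icc]
    constructor
    · simp only [leftEnd_cons]
      have := (le_div_iff₀ hu).mp hlow
      nlinarith
    · simp only [leftEnd_cons, List.length_cons]
      have := (div_lt_iff₀ hu).mp hhigh
      nlinarith
  · push_neg at hcase
    have hieq : i = 65535 := by
      have : 65535 ≤ ⌊(x - L) / u⌋₊ := by
        have := Nat.le_floor (α := ℝ) (n := 65535) (by linarith : (65535:ℝ) ≤ (x - L)/u)
        exact this
      omega
    have hge : 65536 * u ≤ x - L := by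
      have := (le_div_iff₀ hu).mp hcase
      linarith
    rw [Jset, Set.mem_Icc]
    constructor
    · simp only [leftEnd_cons, hieq]
      push_cast
      nlinarith
    · simp only [leftEnd_cons, List.length_cons, hieq]
      push_cast
      nlinarith

lemma massf_le_sum (hℓ : 0 < ℓ₀) (p : List ℕ) :
    massf A a₀ ℓ₀ p ≤ ∑ i ∈ Finset.range 65536, massf A a₀ ℓ₀ (i :: p) := by
  have hsub : A ∩ Jset a₀ ℓ₀ p ⊆ ⋃ i ∈ Finset.range 65536, A ∩ Jset a₀ ℓ₀ (i :: p) := by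
    intro x hx
    obtain ⟨hxA, hxJ⟩ := hx
    have h2 := Jset_cover hℓ p hxJ
    simp only [Set.mem_iUnion, exists_prop] at h2 ⊢
    obtain ⟨i, hi, hxi⟩ := h2
    exact ⟨i, hi, hxA, hxi⟩
  have h1 : volume (A ∩ Jset a₀ ℓ₀ p) ≤
      ∑ i ∈ Finset.range 65536, volume (A ∩ Jset a₀ ℓ₀ (i :: p)) :=
    le_trans (measure_mono hsub) (measure_biUnion_finset_le _ _)
  have hfin : ∀ i ∈ Finset.range 65536, volume (A ∩ Jset a₀ ℓ₀ (i :: p)) ≠ ⊤ := by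
    intro i _
    have : volume (A ∩ Jset a₀ ℓ₀ (i :: p)) ≤ volume (Jset a₀ ℓ₀ (i :: p)) :=
      measure_mono inter_subset_right
    refine ne_of_lt (lt_of_le_of_lt this ?_)
    rw [Jset, Real.volume_Icc]
    exact ENNReal.ofReal_lt_top
  calc massf A a₀ ℓ₀ p ≤
      (∑ i ∈ Finset.range 65536, volume (A ∩ Jset a₀ ℓ₀ (i :: p))).toReal := by
        apply ENNReal.toReal_mono _ h1
        rw [← lt_top_iff_ne_top]
        exact ENNReal.sum_lt_top.mpr (fun i hi => lt_top_iff_ne_top.mpr (hfin i hi))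
  _ = ∑ i ∈ Finset.range 65536, massf A a₀ ℓ₀ (i :: p) := ENNReal.toReal_sum hfin

lemma Spf_eq (p : List ℕ) :
    Spf A a₀ ℓ₀ p = ∑ i ∈ classIdx (tauSel A a₀ ℓ₀ p), massf A a₀ ℓ₀ (i :: p) := by
  rw [Spf, chosen]
  apply Finset.sum_filter_of_ne
  intro i _ hne
  rcases lt_or_eq_of_le (massf_nonneg A a₀ ℓ₀ (i :: p)) with h | h
  · exact h
  · exact absurd h.symm hne

lemma Spf_lower (hℓ : 0 < ℓ₀) (p : List ℕ) :
    512 * massf A a₀ ℓ₀ p ≤ 131072 * Spf A a₀ ℓ₀ p := by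
  rw [Spf_eq]
  calc 512 * massf A a₀ ℓ₀ p ≤
      512 * ∑ i ∈ Finset.range 65536, massf A a₀ ℓ₀ (i :: p) := by
        have := massf_le_sum (A := A) (a₀ := a₀) hℓ p
        linarith
  _ ≤ _ := tauSel_spec A a₀ ℓ₀ p

lemma Spf_pos (hℓ : 0 < ℓ₀) (hm0 : 0 < massf A a₀ ℓ₀ []) {p : List ℕ}
    (hp : alive A a₀ ℓ₀ p) : 0 < Spf A a₀ ℓ₀ p := by
  have h1 := Spf_lower (A := A) (a₀ := a₀) hℓ p
  have h2 := massf_pos hm0 hp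
  linarith

lemma chosen_nonempty (hℓ : 0 < ℓ₀) (hm0 : 0 < massf A a₀ ℓ₀ []) {p : List ℕ}
    (hp : alive A a₀ ℓ₀ p) : (chosen A a₀ ℓ₀ p).Nonempty := by
  by_contra h
  rw [Finset.not_nonempty_iff_eq_empty] at h
  have := Spf_pos hℓ hm0 hp
  rw [Spf, h, Finset.sum_empty] at this
  exact lt_irrefl _ this

lemma Jset_disj (hℓ : 0 < ℓ₀) :
    ∀ p q : List ℕ, alive A a₀ ℓ₀ p → alive A a₀ ℓ₀ q → p.length = q.length → p ≠ q →
      ∀ x, x ∈ Jset a₀ ℓ₀ p → x ∈ Jset a₀ ℓ₀ q → False := by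
  intro p
  induction p with
  | nil =>
    intro q _ _ hl hne _ _ _
    apply hne
    have h0 : q.length = 0 := by simpa using hl.symm
    exact (List.length_eq_zero_iff.mp h0).symm
  | cons i p ih =>
    intro q hp hq hl hne x hxp hxq
    cases q with
    | nil => simp at hl
    | cons j q =>
      by_cases hpq : p = q
      · subst hpq
        have hij : i ≠ j := fun h => hne (by rw [h])
        have hgap := chosen_gap hp.1 hq.1 hij
        have hu := cellLen_pos hℓ (p.length + 1)
        obtain ⟨ha1, ha2⟩ := hxp
        obtain ⟨hb1, hb2⟩ := hxq
        simp only [leftEnd_cons, List.length_cons] at ha1 ha2 hb1 hb2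
        rcases lt_or_gt_of_ne hij with hlt | hlt
        · have h3 : (i : ℝ) + 3 ≤ j := by
            have h3' : (i : ℤ) + 3 ≤ j := by
              rcases abs_cases ((i:ℤ) - j) with ⟨he, -⟩ | ⟨he, -⟩ <;> omega
            exact_mod_cast h3'
          have h4 : (i:ℝ) * cellLen ℓ₀ (p.length + 1) + cellLen ℓ₀ (p.length + 1)
              < (j:ℝ) * cellLen ℓ₀ (p.length + 1) := by
            nlinarith [mul_pos (by linarith : (0:ℝ) < (j:ℝ) - i - 1) hu]
          linarith
        · have h3 : (j : ℝ) + 3 ≤ i := by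
            have h3' : (j : ℤ) + 3 ≤ i := by
              rcases abs_cases ((i:ℤ) - j) with ⟨he, -⟩ | ⟨he, -⟩ <;> omega
            exact_mod_cast h3'
          have h4 : (j:ℝ) * cellLen ℓ₀ (p.length + 1) + cellLen ℓ₀ (p.length + 1)
              < (i:ℝ) * cellLen ℓ₀ (p.length + 1) := by
            nlinarith [mul_pos (by linarith : (0:ℝ) < (i:ℝ) - j - 1) hu]
          linarith
      · have hxp' := Jset_cons_subset hℓ (chosen_lt hp.1) p hxp
        have hxq' := Jset_cons_subset hℓ (chosen_lt hq.1) q hxq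
        exact ih q hp.2 hq.2 (by simpa using hl) hpq x hxp' hxq'

lemma path_unique (hℓ : 0 < ℓ₀) {x : ℝ} {p q : List ℕ} (hp : alive A a₀ ℓ₀ p)
    (hq : alive A a₀ ℓ₀ q) (hl : p.length = q.length) (hxp : x ∈ Jset a₀ ℓ₀ p)
    (hxq : x ∈ Jset a₀ ℓ₀ q) : p = q := by
  by_contra hne
  exact Jset_disj hℓ p q hp hq hl hne x hxp hxq


lemma Jset_diam {p : List ℕ} {x y : ℝ} (hx : x ∈ Jset a₀ ℓ₀ p) (hy : y ∈ Jset a₀ ℓ₀ p) :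
    |x - y| ≤ cellLen ℓ₀ p.length := by
  obtain ⟨h1, h2⟩ := hx
  obtain ⟨h3, h4⟩ := hy
  rw [abs_sub_le_iff]
  constructor <;> linarith

lemma cell_gap (hℓ : 0 < ℓ₀) {i j : ℕ} {p : List ℕ} (hi : i ∈ chosen A a₀ ℓ₀ p)
    (hj : j ∈ chosen A a₀ ℓ₀ p) (hij : i ≠ j) {x y : ℝ}
    (hx : x ∈ Jset a₀ ℓ₀ (i :: p)) (hy : y ∈ Jset a₀ ℓ₀ (j :: p)) :
    2 * cellLen ℓ₀ (p.length + 1) ≤ |x - y| := by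
  have hu := cellLen_pos hℓ (p.length + 1)
  have hgap := chosen_gap hi hj hij
  obtain ⟨ha1, ha2⟩ := hx
  obtain ⟨hb1, hb2⟩ := hy
  simp only [leftEnd_cons, List.length_cons] at ha1 ha2 hb1 hb2
  rcases lt_or_gt_of_ne hij with hlt | hlt
  · have h3 : (i : ℝ) + 3 ≤ j := by
      have h3' : (i : ℤ) + 3 ≤ j := by
        rcases abs_cases ((i:ℤ) - j) with ⟨he, -⟩ | ⟨he, -⟩ <;> omega
      exact_mod_cast h3'
    have h4 : (i:ℝ) * cellLen ℓ₀ (p.length + 1) + 3 * cellLen ℓ₀ (p.length + 1)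
        ≤ (j:ℝ) * cellLen ℓ₀ (p.length + 1) := by
      nlinarith [mul_le_mul_of_nonneg_right h3 (le_of_lt hu)]
    rw [abs_sub_comm, abs_of_nonneg (by linarith)]
    linarith
  · have h3 : (j : ℝ) + 3 ≤ i := by
      have h3' : (j : ℤ) + 3 ≤ i := by
        rcases abs_cases ((i:ℤ) - j) with ⟨he, -⟩ | ⟨he, -⟩ <;> omega
      exact_mod_cast h3'
    have h4 : (j:ℝ) * cellLen ℓ₀ (p.length + 1) + 3 * cellLen ℓ₀ (p.length + 1)
        ≤ (i:ℝ) * cellLen ℓ₀ (p.length + 1) := by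
      nlinarith [mul_le_mul_of_nonneg_right h3 (le_of_lt hu)]
    rw [abs_of_nonneg (by linarith)]
    linarith

lemma length_zero_eq_nil {p : List ℕ} (h : p.length = 0) : p = [] :=
  List.length_eq_zero_iff.mp h

/-- a coherent path family for a point of `Xset`. -/
lemma exists_pathFam (hℓ : 0 < ℓ₀) {x : ℝ} (hx : x ∈ Xset A a₀ ℓ₀) :
    ∃ P : ℕ → List ℕ, (∀ k, (P k).length = k ∧ alive A a₀ ℓ₀ (P k) ∧ x ∈ Jset a₀ ℓ₀ (P k)) ∧
      ∀ k, ∃ i, i ∈ chosen A a₀ ℓ₀ (P k) ∧ P (k + 1) = i :: P k := by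
  refine ⟨fun k => (hx k).choose, fun k => (hx k).choose_spec, ?_⟩
  intro k
  obtain ⟨hl, hal, hmem⟩ := (hx (k+1)).choose_spec
  obtain ⟨hl', hal', hmem'⟩ := (hx k).choose_spec
  obtain ⟨i, p', hcons⟩ := List.exists_cons_of_ne_nil (l := (hx (k+1)).choose)
    (by intro h; rw [h] at hl; simp at hl)
  rw [hcons] at hl hal hmem
  have hlen : p'.length = k := by simpa using hl
  have hsub : x ∈ Jset a₀ ℓ₀ p' := Jset_cons_subset hℓ (chosen_lt hal.1) p' hmem
  have hpq : p' = (hx k).choose := path_unique hℓ hal.2 hal' (by omega) hsub hmem'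
  refine ⟨i, ?_, ?_⟩
  · show i ∈ chosen A a₀ ℓ₀ (hx k).choose
    rw [← hpq]; exact hal.1
  · show (hx (k+1)).choose = i :: (hx k).choose
    rw [hcons, hpq]

lemma exists_small_cell (hℓ : 0 < ℓ₀) {d : ℝ} (hd : 0 < d) : ∃ k, cellLen ℓ₀ k < d := by
  obtain ⟨k, hk⟩ := pow_unbounded_of_one_lt (ℓ₀ / d) (by norm_num : (1:ℝ) < 65536)
  refine ⟨k, ?_⟩
  rw [cellLen, div_lt_iff₀ (by positivity)]
  rw [div_lt_iff₀ hd] at hk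
  linarith

lemma exists_sep (hℓ : 0 < ℓ₀) {x y : ℝ} (hx : x ∈ Xset A a₀ ℓ₀) (hy : y ∈ Xset A a₀ ℓ₀)
    (hxy : x ≠ y) :
    ∃ p : List ℕ, alive A a₀ ℓ₀ p ∧ ∃ i j, i ∈ chosen A a₀ ℓ₀ p ∧ j ∈ chosen A a₀ ℓ₀ p ∧
      i ≠ j ∧ x ∈ Jset a₀ ℓ₀ (i :: p) ∧ y ∈ Jset a₀ ℓ₀ (j :: p) := by
  obtain ⟨P, hP, hPc⟩ := exists_pathFam hℓ hx
  obtain ⟨Q, hQ, hQc⟩ := exists_pathFam hℓ hy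
  have hne : ∃ k, P k ≠ Q k := by
    obtain ⟨k, hk⟩ := exists_small_cell (ℓ₀ := ℓ₀) hℓ (abs_pos.mpr (sub_ne_zero.mpr hxy))
    refine ⟨k, fun h => ?_⟩
    have := Jset_diam (a₀ := a₀) (hP k).2.2 (h ▸ (hQ k).2.2)
    rw [(hP k).1] at this
    linarith
  have h0 : P 0 = Q 0 := by
    rw [length_zero_eq_nil (hP 0).1, length_zero_eq_nil (hQ 0).1]
  have hfind : P (Nat.find hne) ≠ Q (Nat.find hne) := Nat.find_spec hne
  have hn0 : Nat.find hne ≠ 0 := by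
    intro h
    apply hfind
    rw [h]; exact h0
  obtain ⟨m, hm⟩ : ∃ m, Nat.find hne = m + 1 := ⟨Nat.find hne - 1, by omega⟩
  rw [hm] at hfind
  have hprev : P m = Q m := by
    by_contra h
    exact Nat.find_min hne (m := m) (by omega) h
  obtain ⟨i, hi, hPi⟩ := hPc m
  obtain ⟨j, hj, hQj⟩ := hQc m
  refine ⟨P m, (hP m).2.1, i, j, hi, ?_, ?_, ?_, ?_⟩
  · rw [hprev]; exact hj
  · intro h
    apply hfind
    rw [hPi, hQj, hprev, h]
  · rw [← hPi]; exact (hP (m+1)).2.2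
  · rw [hprev, ← hQj]; exact (hQ (m+1)).2.2

lemma exists_sep3 (hℓ : 0 < ℓ₀) {t₁ t₂ t₃ : ℝ} (h1 : t₁ ∈ Xset A a₀ ℓ₀)
    (h2 : t₂ ∈ Xset A a₀ ℓ₀) (h3 : t₃ ∈ Xset A a₀ ℓ₀) (h12 : t₁ ≠ t₂) :
    ∃ p : List ℕ, alive A a₀ ℓ₀ p ∧ ∃ a b c, a ∈ chosen A a₀ ℓ₀ p ∧ b ∈ chosen A a₀ ℓ₀ p ∧
      c ∈ chosen A a₀ ℓ₀ p ∧ ¬(a = b ∧ a = c) ∧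
      t₁ ∈ Jset a₀ ℓ₀ (a :: p) ∧ t₂ ∈ Jset a₀ ℓ₀ (b :: p) ∧ t₃ ∈ Jset a₀ ℓ₀ (c :: p) := by
  obtain ⟨P, hP, hPc⟩ := exists_pathFam hℓ h1
  obtain ⟨Q, hQ, hQc⟩ := exists_pathFam hℓ h2
  obtain ⟨R, hR, hRc⟩ := exists_pathFam hℓ h3
  have hne : ∃ k, ¬(P k = Q k ∧ P k = R k) := by
    obtain ⟨k, hk⟩ := exists_small_cell (ℓ₀ := ℓ₀) hℓ (abs_pos.mpr (sub_ne_zero.mpr h12))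
    refine ⟨k, fun h => ?_⟩
    have := Jset_diam (a₀ := a₀) (hP k).2.2 (h.1 ▸ (hQ k).2.2)
    rw [(hP k).1] at this
    linarith
  have h0 : P 0 = Q 0 ∧ P 0 = R 0 := by
    rw [length_zero_eq_nil (hP 0).1, length_zero_eq_nil (hQ 0).1, length_zero_eq_nil (hR 0).1]
    exact ⟨rfl, rfl⟩
  have hfind := Nat.find_spec hne
  have hn0 : Nat.find hne ≠ 0 := by
    intro h
    apply hfind
    rw [h]; exact h0
  obtain ⟨m, hm⟩ : ∃ m, Nat.find hne = m + 1 := ⟨Nat.find hne - 1, by omega⟩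
  have hprev : P m = Q m ∧ P m = R m := by
    by_contra h
    exact Nat.find_min hne (m := m) (by omega) h
  obtain ⟨a, ha, hPa⟩ := hPc m
  obtain ⟨b, hb, hQb⟩ := hQc m
  obtain ⟨c, hc, hRc'⟩ := hRc m
  refine ⟨P m, (hP m).2.1, a, b, c, ha, ?_, ?_, ?_, ?_, ?_, ?_⟩
  · rw [hprev.1]; exact hb
  · rw [hprev.2]; exact hc
  · rintro ⟨hab, hac⟩
    apply hfind
    rw [hm]
    constructor
    · rw [hPa, hQb, hprev.1, hab]
    · rw [hPa, hRc', hprev.2, hac]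
  · rw [← hPa]; exact (hP (m+1)).2.2
  · rw [hprev.1, ← hQb]; exact (hQ (m+1)).2.2
  · rw [hprev.2, ← hRc']; exact (hR (m+1)).2.2

lemma margin (hℓ : 0 < ℓ₀) {p : List ℕ} {a b c : ℕ} (ha : a ∈ chosen A a₀ ℓ₀ p)
    (hb : b ∈ chosen A a₀ ℓ₀ p) (hc : c ∈ chosen A a₀ ℓ₀ p) (hnabc : ¬(a = b ∧ a = c))
    {t₁ t₂ t₃ : ℝ} (h1 : t₁ ∈ Jset a₀ ℓ₀ (a :: p)) (h2 : t₂ ∈ Jset a₀ ℓ₀ (b :: p))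
    (h3 : t₃ ∈ Jset a₀ ℓ₀ (c :: p)) :
    cellLen ℓ₀ (p.length + 1) ≤ |t₁ + t₂ - 2 * t₃| := by
  have hu := cellLen_pos hℓ (p.length + 1)
  set u := cellLen ℓ₀ (p.length + 1) with hu_def
  have hint := chosen_ap3 ha hb hc hnabc
  obtain ⟨e1, f1⟩ := h1
  obtain ⟨e2, f2⟩ := h2
  obtain ⟨e3, f3⟩ := h3
  simp only [leftEnd_cons, List.length_cons, ← hu_def] at e1 f1 e2 f2 e3 f3
  rcases abs_cases ((a:ℤ) + b - 2 * c) with ⟨hcase, -⟩ | ⟨hcase, -⟩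
  · have hr : (3:ℝ) ≤ (a:ℝ) + b - 2 * c := by
      have : (3:ℤ) ≤ (a:ℤ) + b - 2 * c := by omega
      exact_mod_cast this
    have hS : u ≤ t₁ + t₂ - 2 * t₃ := by
      nlinarith [mul_le_mul_of_nonneg_right hr (le_of_lt hu)]
    exact le_abs.mpr (Or.inl hS)
  · have hr : (a:ℝ) + b - 2 * c ≤ -3 := by
      have : (a:ℤ) + b - 2 * c ≤ -3 := by omega
      exact_mod_cast this
    have hS : u ≤ -(t₁ + t₂ - 2 * t₃) := by
      nlinarith [mul_le_mul_of_nonneg_right (by linarith : (3:ℝ) ≤ -((a:ℝ) + b - 2*c)) (le_of_lt hu)]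
    exact le_abs.mpr (Or.inr hS)


lemma cellLen_zero (ℓ₀ : ℝ) : cellLen ℓ₀ 0 = ℓ₀ := by simp [cellLen]

lemma Jset_sub_root (hℓ : 0 < ℓ₀) {p : List ℕ} (hp : alive A a₀ ℓ₀ p) :
    Jset a₀ ℓ₀ p ⊆ Jset a₀ ℓ₀ [] := by
  induction p with
  | nil => exact subset_rfl
  | cons i p ih =>
    exact subset_trans (Jset_cons_subset hℓ (chosen_lt hp.1) p) (ih hp.2)

lemma massf_ne_zero_vol (hm0 : 0 < massf A a₀ ℓ₀ []) {p : List ℕ} (hp : alive A a₀ ℓ₀ p) :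
    volume (A ∩ Jset a₀ ℓ₀ p) ≠ 0 := by
  intro h
  have h2 := massf_pos hm0 hp
  rw [massf, h] at h2
  simp at h2

section Secant

variable {E : Type*} [NormedAddCommGroup E] [NormedSpace ℝ E]

lemma secant (hℓ : 0 < ℓ₀) (hm0 : 0 < massf A a₀ ℓ₀ []) {φ : ℝ → E} {v : E} {η ρ : ℝ}
    (hρ : ℓ₀ ≤ ρ) (hη : 0 ≤ η)
    (hinc : ∀ a ∈ A, ∀ z : ℝ, |z - a| ≤ ρ → ‖φ z - φ a - (z - a) • v‖ ≤ η * |z - a|)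
    {x y : ℝ} (hx : x ∈ Xset A a₀ ℓ₀) (hy : y ∈ Xset A a₀ ℓ₀) :
    ‖φ x - φ y - (x - y) • v‖ ≤ 65536 * η * |x - y| := by
  by_cases hxy : x = y
  · subst hxy
    simp
  obtain ⟨p, hal, i, j, hi, hj, hij, hxi, hyj⟩ := exists_sep hℓ hx hy hxy
  obtain ⟨a, haA, haJ⟩ := nonempty_of_measure_ne_zero (massf_ne_zero_vol hm0 hal)
  have hxJ : x ∈ Jset a₀ ℓ₀ p := Jset_cons_subset hℓ (chosen_lt hi) p hxi
  have hyJ : y ∈ Jset a₀ ℓ₀ p := Jset_cons_subset hℓ (chosen_lt hj) p hyj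
  have hxa : |x - a| ≤ cellLen ℓ₀ p.length := Jset_diam hxJ haJ
  have hya : |y - a| ≤ cellLen ℓ₀ p.length := Jset_diam hyJ haJ
  have hcρ : cellLen ℓ₀ p.length ≤ ρ := le_trans (cellLen_le hℓ.le _) hρ
  have h1 := hinc a haA x (le_trans hxa hcρ)
  have h2 := hinc a haA y (le_trans hya hcρ)
  have hid : φ x - φ y - (x - y) • v =
      (φ x - φ a - (x - a) • v) - (φ y - φ a - (y - a) • v) := by
    rw [sub_smul, sub_smul, sub_smul]
    abel
  rw [hid]
  have hkey := norm_sub_le (φ x - φ a - (x - a) • v) (φ y - φ a - (y - a) • v)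
  have hgap := cell_gap hℓ hi hj hij hxi hyj
  have hcl : cellLen ℓ₀ p.length = 65536 * cellLen ℓ₀ (p.length + 1) := cellLen_succ' ℓ₀ _
  have hb1 : η * |x - a| ≤ η * cellLen ℓ₀ p.length := mul_le_mul_of_nonneg_left hxa hη
  have hb2 : η * |y - a| ≤ η * cellLen ℓ₀ p.length := mul_le_mul_of_nonneg_left hya hη
  have hfin : 2 * (η * cellLen ℓ₀ p.length) ≤ 65536 * η * |x - y| := by
    rw [hcl]
    nlinarith [mul_le_mul_of_nonneg_left hgap (mul_nonneg (by norm_num : (0:ℝ) ≤ 65536) hη)]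
  linarith

end Secant

/-! ### Weights -/

lemma wfn_nil : wfn A a₀ ℓ₀ [] = 1 := rfl

lemma offf_nil : offf A a₀ ℓ₀ [] = 0 := rfl

lemma wfn_cons {i : ℕ} {p : List ℕ} (h : i ∈ chosen A a₀ ℓ₀ p) :
    wfn A a₀ ℓ₀ (i :: p) = wfn A a₀ ℓ₀ p * massf A a₀ ℓ₀ (i :: p) / Spf A a₀ ℓ₀ p := by
  rw [wfn, if_pos h]

lemma offf_cons (i : ℕ) (p : List ℕ) :
    offf A a₀ ℓ₀ (i :: p) = offf A a₀ ℓ₀ p +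
      ∑ j ∈ (chosen A a₀ ℓ₀ p).filter (· < i), wfn A a₀ ℓ₀ (j :: p) := by
  rw [offf]

lemma Spf_nonneg (p : List ℕ) : 0 ≤ Spf A a₀ ℓ₀ p :=
  Finset.sum_nonneg fun i _ => massf_nonneg _ _ _ _

lemma wfn_nonneg : ∀ p : List ℕ, 0 ≤ wfn A a₀ ℓ₀ p := by
  intro p
  induction p with
  | nil => norm_num [wfn_nil]
  | cons i p ih =>
    by_cases h : i ∈ chosen A a₀ ℓ₀ p
    · rw [wfn_cons h]
      exact div_nonneg (mul_nonneg ih (massf_nonneg _ _ _ _)) (Spf_nonneg _)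
    · rw [wfn, if_neg h]

lemma wfn_pos (hℓ : 0 < ℓ₀) (hm0 : 0 < massf A a₀ ℓ₀ []) :
    ∀ {p : List ℕ}, alive A a₀ ℓ₀ p → 0 < wfn A a₀ ℓ₀ p := by
  intro p
  induction p with
  | nil => intro _; norm_num [wfn_nil]
  | cons i p ih =>
    intro hal
    rw [wfn_cons hal.1]
    exact div_pos (mul_pos (ih hal.2) (chosen_pos hal.1)) (Spf_pos hℓ hm0 hal.2)

lemma wfn_conserve (hℓ : 0 < ℓ₀) (hm0 : 0 < massf A a₀ ℓ₀ []) {p : List ℕ}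
    (hal : alive A a₀ ℓ₀ p) :
    ∑ i ∈ chosen A a₀ ℓ₀ p, wfn A a₀ ℓ₀ (i :: p) = wfn A a₀ ℓ₀ p := by
  have hS := Spf_pos hℓ hm0 hal
  calc ∑ i ∈ chosen A a₀ ℓ₀ p, wfn A a₀ ℓ₀ (i :: p)
      = ∑ i ∈ chosen A a₀ ℓ₀ p, wfn A a₀ ℓ₀ p * massf A a₀ ℓ₀ (i :: p) / Spf A a₀ ℓ₀ p :=
        Finset.sum_congr rfl fun i hi => wfn_cons hi
  _ = (wfn A a₀ ℓ₀ p * ∑ i ∈ chosen A a₀ ℓ₀ p, massf A a₀ ℓ₀ (i :: p)) / Spf A a₀ ℓ₀ p := by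
        rw [Finset.mul_sum, Finset.sum_div]
  _ = wfn A a₀ ℓ₀ p := by
        rw [← Spf]
        field_simp

lemma wfn_le (hℓ : 0 < ℓ₀) (hm0 : 0 < massf A a₀ ℓ₀ []) :
    ∀ {p : List ℕ}, alive A a₀ ℓ₀ p →
      wfn A a₀ ℓ₀ p ≤ massf A a₀ ℓ₀ p * 256 ^ p.length / massf A a₀ ℓ₀ [] := by
  intro p
  induction p with
  | nil =>
    intro _
    rw [wfn_nil]
    rw [List.length_nil, pow_zero, mul_one, div_self (ne_of_gt hm0)]
  | cons i p ih =>
    intro hal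
    have hmp := massf_pos hm0 hal.2
    have hmi := chosen_pos hal.1
    have hS := Spf_pos hℓ hm0 hal.2
    have hS' : massf A a₀ ℓ₀ p / 256 ≤ Spf A a₀ ℓ₀ p := by
      have := Spf_lower (A := A) (a₀ := a₀) hℓ p
      linarith
    rw [wfn_cons hal.1]
    have hstep1 : wfn A a₀ ℓ₀ p * massf A a₀ ℓ₀ (i :: p) / Spf A a₀ ℓ₀ p ≤
        wfn A a₀ ℓ₀ p * massf A a₀ ℓ₀ (i :: p) / (massf A a₀ ℓ₀ p / 256) := by
      apply div_le_div_of_nonneg_left _ (by positivity) hS'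
      exact mul_nonneg (wfn_nonneg _) (massf_nonneg _ _ _ _)
    have heq1 : wfn A a₀ ℓ₀ p * massf A a₀ ℓ₀ (i :: p) / (massf A a₀ ℓ₀ p / 256) =
        wfn A a₀ ℓ₀ p * (massf A a₀ ℓ₀ (i :: p) * 256 / massf A a₀ ℓ₀ p) := by
      field_simp
    have hstep2 : wfn A a₀ ℓ₀ p * (massf A a₀ ℓ₀ (i :: p) * 256 / massf A a₀ ℓ₀ p) ≤
        (massf A a₀ ℓ₀ p * 256 ^ p.length / massf A a₀ ℓ₀ []) *
          (massf A a₀ ℓ₀ (i :: p) * 256 / massf A a₀ ℓ₀ p) :=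
      mul_le_mul_of_nonneg_right (ih hal.2) (by positivity)
    have heq2 : (massf A a₀ ℓ₀ p * 256 ^ p.length / massf A a₀ ℓ₀ []) *
          (massf A a₀ ℓ₀ (i :: p) * 256 / massf A a₀ ℓ₀ p) =
        massf A a₀ ℓ₀ (i :: p) * 256 ^ (i :: p).length / massf A a₀ ℓ₀ [] := by
      rw [List.length_cons, pow_succ]
      field_simp
    rw [heq1] at hstep1
    rw [heq2] at hstep2
    linarith

lemma pow65536_eq (k : ℕ) : (65536 : ℝ) ^ k = 256 ^ k * 256 ^ k := by
  rw [← mul_pow]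
  norm_num

lemma wfn_le' (hℓ : 0 < ℓ₀) (hm0 : 0 < massf A a₀ ℓ₀ []) {p : List ℕ}
    (hal : alive A a₀ ℓ₀ p) :
    wfn A a₀ ℓ₀ p ≤ ℓ₀ / (massf A a₀ ℓ₀ [] * 256 ^ p.length) := by
  have h1 := wfn_le hℓ hm0 hal
  have h2 := massf_le_cellLen A (a₀ := a₀) hℓ p
  have h3 : massf A a₀ ℓ₀ p * 256 ^ p.length / massf A a₀ ℓ₀ [] ≤
      cellLen ℓ₀ p.length * 256 ^ p.length / massf A a₀ ℓ₀ [] := by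
    gcongr
  have h4 : cellLen ℓ₀ p.length * 256 ^ p.length / massf A a₀ ℓ₀ [] =
      ℓ₀ / (massf A a₀ ℓ₀ [] * 256 ^ p.length) := by
    rw [cellLen, pow65536_eq]
    field_simp
  rw [h4] at h3
  linarith

lemma offf_le_cons {i : ℕ} (p : List ℕ) :
    offf A a₀ ℓ₀ p ≤ offf A a₀ ℓ₀ (i :: p) := by
  rw [offf_cons]
  have : 0 ≤ ∑ j ∈ (chosen A a₀ ℓ₀ p).filter (· < i), wfn A a₀ ℓ₀ (j :: p) :=
    Finset.sum_nonneg fun j _ => wfn_nonneg _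
  linarith

lemma offf_add_wfn_le (hℓ : 0 < ℓ₀) (hm0 : 0 < massf A a₀ ℓ₀ []) {i : ℕ} {p : List ℕ}
    (hal : alive A a₀ ℓ₀ p) (hi : i ∈ chosen A a₀ ℓ₀ p) :
    offf A a₀ ℓ₀ (i :: p) + wfn A a₀ ℓ₀ (i :: p) ≤ offf A a₀ ℓ₀ p + wfn A a₀ ℓ₀ p := by
  rw [offf_cons]
  have hnotmem : i ∉ (chosen A a₀ ℓ₀ p).filter (· < i) := by
    simp [Finset.mem_filter]
  have hins : (∑ j ∈ (chosen A a₀ ℓ₀ p).filter (· < i), wfn A a₀ ℓ₀ (j :: p)) +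
      wfn A a₀ ℓ₀ (i :: p) =
      ∑ j ∈ insert i ((chosen A a₀ ℓ₀ p).filter (· < i)), wfn A a₀ ℓ₀ (j :: p) := by
    rw [Finset.sum_insert hnotmem]
    ring
  have hsub : insert i ((chosen A a₀ ℓ₀ p).filter (· < i)) ⊆ chosen A a₀ ℓ₀ p := by
    intro j hj
    rcases Finset.mem_insert.mp hj with rfl | hj
    · exact hi
    · exact (Finset.mem_filter.mp hj).1
  have hle : ∑ j ∈ insert i ((chosen A a₀ ℓ₀ p).filter (· < i)), wfn A a₀ ℓ₀ (j :: p) ≤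
      ∑ j ∈ chosen A a₀ ℓ₀ p, wfn A a₀ ℓ₀ (j :: p) :=
    Finset.sum_le_sum_of_subset_of_nonneg hsub (fun j _ _ => wfn_nonneg _)
  rw [wfn_conserve hℓ hm0 hal] at hle
  linarith


/-! ### The Hoelder map -/

lemma choose_coherent (hℓ : 0 < ℓ₀) {x : ℝ} (hx : x ∈ Xset A a₀ ℓ₀) (k : ℕ) :
    ∃ i ∈ chosen A a₀ ℓ₀ (hx k).choose, (hx (k+1)).choose = i :: (hx k).choose := by
  obtain ⟨hl, hal, hmem⟩ := (hx (k+1)).choose_spec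
  obtain ⟨hl', hal', hmem'⟩ := (hx k).choose_spec
  obtain ⟨i, p', hcons⟩ := List.exists_cons_of_ne_nil (l := (hx (k+1)).choose)
    (by intro h; rw [h] at hl; simp at hl)
  rw [hcons] at hl hal hmem
  have hlen : p'.length = k := by simpa using hl
  have hsub : x ∈ Jset a₀ ℓ₀ p' := Jset_cons_subset hℓ (chosen_lt hal.1) p' hmem
  have hpq : p' = (hx k).choose := path_unique hℓ hal.2 hal' (by omega) hsub hmem'
  exact ⟨i, hpq ▸ hal.1, by rw [hcons, hpq]⟩

variable (A a₀ ℓ₀) in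
def ffn (x : ℝ) : ℝ :=
  if hx : x ∈ Xset A a₀ ℓ₀ then ⨆ k, offf A a₀ ℓ₀ (hx k).choose else 0

lemma choose_mono (hℓ : 0 < ℓ₀) (hm0 : 0 < massf A a₀ ℓ₀ []) {x : ℝ}
    (hx : x ∈ Xset A a₀ ℓ₀) :
    ∀ k l, k ≤ l → offf A a₀ ℓ₀ (hx k).choose ≤ offf A a₀ ℓ₀ (hx l).choose ∧
      offf A a₀ ℓ₀ (hx l).choose + wfn A a₀ ℓ₀ (hx l).choose ≤
        offf A a₀ ℓ₀ (hx k).choose + wfn A a₀ ℓ₀ (hx k).choose := by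
  intro k l hkl
  induction l, hkl using Nat.le_induction with
  | base => exact ⟨le_rfl, le_rfl⟩
  | succ l hkl ih =>
    obtain ⟨i, hi, hcons⟩ := choose_coherent hℓ hx l
    have hal : alive A a₀ ℓ₀ (hx l).choose := (hx l).choose_spec.2.1
    have h1 : offf A a₀ ℓ₀ (hx l).choose ≤ offf A a₀ ℓ₀ (hx (l+1)).choose := by
      rw [hcons]; exact offf_le_cons _
    have h2 : offf A a₀ ℓ₀ (hx (l+1)).choose + wfn A a₀ ℓ₀ (hx (l+1)).choose ≤
        offf A a₀ ℓ₀ (hx l).choose + wfn A a₀ ℓ₀ (hx l).choose := by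
      rw [hcons]; exact offf_add_wfn_le hℓ hm0 hal hi
    exact ⟨le_trans ih.1 h1, le_trans h2 ih.2⟩

lemma ffn_mem (hℓ : 0 < ℓ₀) (hm0 : 0 < massf A a₀ ℓ₀ []) {x : ℝ}
    (hx : x ∈ Xset A a₀ ℓ₀) {p : List ℕ} (hal : alive A a₀ ℓ₀ p) (hxp : x ∈ Jset a₀ ℓ₀ p) :
    offf A a₀ ℓ₀ p ≤ ffn A a₀ ℓ₀ x ∧ ffn A a₀ ℓ₀ x ≤ offf A a₀ ℓ₀ p + wfn A a₀ ℓ₀ p := by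
  have hspec := (hx p.length).choose_spec
  have hpe : p = (hx p.length).choose :=
    path_unique hℓ hal hspec.2.1 hspec.1.symm hxp hspec.2.2
  have hub : ∀ k, offf A a₀ ℓ₀ (hx k).choose ≤ offf A a₀ ℓ₀ p + wfn A a₀ ℓ₀ p := by
    intro k
    rcases le_or_gt k p.length with h | h
    · have h1 := (choose_mono hℓ hm0 hx k p.length h).1
      have h2 := wfn_nonneg (A := A) (a₀ := a₀) (ℓ₀ := ℓ₀) p
      rw [← hpe] at h1
      linarith
    · have h1 := (choose_mono hℓ hm0 hx p.length k h.le).2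
      have h2 := wfn_nonneg (A := A) (a₀ := a₀) (ℓ₀ := ℓ₀) (hx k).choose
      rw [← hpe] at h1
      linarith
  have hbdd : BddAbove (Set.range fun k => offf A a₀ ℓ₀ (hx k).choose) := by
    refine ⟨offf A a₀ ℓ₀ p + wfn A a₀ ℓ₀ p, ?_⟩
    rintro z ⟨k, rfl⟩
    exact hub k
  have hfx : ffn A a₀ ℓ₀ x = ⨆ k, offf A a₀ ℓ₀ (hx k).choose := dif_pos hx
  constructor
  · rw [hfx]
    have h1 := le_ciSup hbdd p.length
    rw [← hpe] at h1
    exact h1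
  · rw [hfx]
    exact ciSup_le hub

lemma ffn_dist (hℓ : 0 < ℓ₀) (hm0 : 0 < massf A a₀ ℓ₀ []) {x y : ℝ}
    (hx : x ∈ Xset A a₀ ℓ₀) (hy : y ∈ Xset A a₀ ℓ₀) :
    |ffn A a₀ ℓ₀ x - ffn A a₀ ℓ₀ y| ≤
      (256 * ℓ₀ / (massf A a₀ ℓ₀ [] * Real.sqrt (2 * ℓ₀))) * Real.sqrt |x - y| := by
  set C₀ := 256 * ℓ₀ / (massf A a₀ ℓ₀ [] * Real.sqrt (2 * ℓ₀)) with hC₀def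
  have hsq : 0 < Real.sqrt (2 * ℓ₀) := Real.sqrt_pos.mpr (by linarith)
  have hC₀ : 0 ≤ C₀ := by positivity
  by_cases hxy : x = y
  · subst hxy
    simp [Real.sqrt_zero]
  obtain ⟨p, hal, i, j, hi, hj, hij, hxi, hyj⟩ := exists_sep hℓ hx hy hxy
  have hxJ : x ∈ Jset a₀ ℓ₀ p := Jset_cons_subset hℓ (chosen_lt hi) p hxi
  have hyJ : y ∈ Jset a₀ ℓ₀ p := Jset_cons_subset hℓ (chosen_lt hj) p hyj
  obtain ⟨hfx1, hfx2⟩ := ffn_mem hℓ hm0 hx hal hxJ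
  obtain ⟨hfy1, hfy2⟩ := ffn_mem hℓ hm0 hy hal hyJ
  have hstep1 : |ffn A a₀ ℓ₀ x - ffn A a₀ ℓ₀ y| ≤ wfn A a₀ ℓ₀ p := by
    rw [abs_le]; constructor <;> linarith
  have hgap := cell_gap hℓ hi hj hij hxi hyj
  set k := p.length with hk
  have hwle : wfn A a₀ ℓ₀ p ≤ ℓ₀ / (massf A a₀ ℓ₀ [] * 256 ^ k) := wfn_le' hℓ hm0 hal
  have hsqid : Real.sqrt (2 * cellLen ℓ₀ (k + 1)) = Real.sqrt (2 * ℓ₀) / 256 ^ (k+1) := by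
    rw [cellLen, mul_div_assoc' 2 ℓ₀ _, Real.sqrt_div (by linarith)]
    congr 1
    have h65 : ((256:ℝ) ^ (k+1)) ^ 2 = 65536 ^ (k+1) := by
      rw [← pow_mul, show (65536:ℝ) = 256 ^ 2 by norm_num, ← pow_mul]
      ring_nf
    rw [← h65, Real.sqrt_sq (by positivity)]
  have hmono : Real.sqrt (2 * cellLen ℓ₀ (k + 1)) ≤ Real.sqrt |x - y| :=
    Real.sqrt_le_sqrt hgap
  have hCeq : C₀ * (Real.sqrt (2 * ℓ₀) / 256 ^ (k+1)) = ℓ₀ / (massf A a₀ ℓ₀ [] * 256 ^ k) := by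
    rw [hC₀def]
    rw [pow_succ]
    field_simp
  have hfinal : ℓ₀ / (massf A a₀ ℓ₀ [] * 256 ^ k) ≤ C₀ * Real.sqrt |x - y| := by
    rw [← hCeq, ← hsqid]
    exact mul_le_mul_of_nonneg_left hmono hC₀
  linarith

lemma exists_div_pow_lt (C : ℝ) {ε : ℝ} (hε : 0 < ε) : ∃ k : ℕ, C / (256:ℝ) ^ k < ε := by
  rcases le_or_gt C 0 with h | h
  · exact ⟨0, by simpa using lt_of_le_of_lt (by linarith : C / (256:ℝ)^0 ≤ 0) hε⟩
  · obtain ⟨k, hk⟩ := pow_unbounded_of_one_lt (C / ε) (by norm_num : (1:ℝ) < 256)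
    refine ⟨k, ?_⟩
    rw [div_lt_iff₀ (by positivity)]
    rw [div_lt_iff₀ hε] at hk
    nlinarith [pow_pos (by norm_num : (0:ℝ) < 256) k]

lemma exists_window : ∀ (S : Finset ℕ) (g : ℕ → ℝ), (∀ i ∈ S, 0 < g i) → ∀ y : ℝ, 0 ≤ y →
    y < ∑ i ∈ S, g i →
    ∃ i ∈ S, (∑ j ∈ S.filter (· < i), g j) ≤ y ∧ y < (∑ j ∈ S.filter (· < i), g j) + g i := by
  intro S
  induction S using Finset.strongInduction with
  | _ S ih =>
    intro g hg y hy0 hyS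
    have hSne : S.Nonempty := by
      by_contra h
      rw [Finset.not_nonempty_iff_eq_empty] at h
      subst h
      simp at hyS
      linarith
    have hmmem := S.max'_mem hSne
    have herase : S.filter (· < S.max' hSne) = S.erase (S.max' hSne) := by
      ext a
      simp only [Finset.mem_filter, Finset.mem_erase]
      constructor
      · rintro ⟨h1, h2⟩
        exact ⟨by omega, h1⟩
      · rintro ⟨h1, h2⟩
        refine ⟨h2, ?_⟩
        have := S.le_max' a h2
        omega
    by_cases hc : y < ∑ j ∈ S.erase (S.max' hSne), g j
    · obtain ⟨i, hiS, h1, h2⟩ := ih (S.erase (S.max' hSne))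
        (Finset.erase_ssubset hmmem) g
        (fun i hi => hg i (Finset.mem_of_mem_erase hi)) y hy0 hc
      have hfeq : (S.erase (S.max' hSne)).filter (· < i) = S.filter (· < i) := by
        ext a
        simp only [Finset.mem_filter, Finset.mem_erase]
        constructor
        · rintro ⟨⟨h3, h4⟩, h5⟩
          exact ⟨h4, h5⟩
        · rintro ⟨h3, h4⟩
          have hiS' := Finset.mem_of_mem_erase hiS
          have hine : i ≠ S.max' hSne := (Finset.mem_erase.mp hiS).1
          have hile := S.le_max' i hiS'
          refine ⟨⟨by omega, h3⟩, h4⟩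
      rw [hfeq] at h1 h2
      exact ⟨i, Finset.mem_of_mem_erase hiS, h1, h2⟩
    · push_neg at hc
      refine ⟨S.max' hSne, hmmem, ?_, ?_⟩
      · rw [herase]
        exact hc
      · rw [herase]
        have := Finset.sum_erase_add S g hmmem
        linarith

lemma step_window (hℓ : 0 < ℓ₀) (hm0 : 0 < massf A a₀ ℓ₀ []) {p : List ℕ}
    (hal : alive A a₀ ℓ₀ p) {y : ℝ} (h1 : offf A a₀ ℓ₀ p ≤ y)
    (h2 : y < offf A a₀ ℓ₀ p + wfn A a₀ ℓ₀ p) :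
    ∃ i, (i ∈ chosen A a₀ ℓ₀ p) ∧ offf A a₀ ℓ₀ (i :: p) ≤ y ∧
      y < offf A a₀ ℓ₀ (i :: p) + wfn A a₀ ℓ₀ (i :: p) := by
  have hwc := wfn_conserve hℓ hm0 hal
  obtain ⟨i, hiS, hw1, hw2⟩ := exists_window (chosen A a₀ ℓ₀ p)
    (fun j => wfn A a₀ ℓ₀ (j :: p)) (fun j hj => wfn_pos hℓ hm0 ⟨hj, hal⟩)
    (y - offf A a₀ ℓ₀ p) (by linarith) (by rw [hwc]; linarith)
  refine ⟨i, hiS, ?_, ?_⟩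
  · rw [offf_cons]
    linarith
  · rw [offf_cons]
    linarith

lemma ffn_surj (hℓ : 0 < ℓ₀) (hm0 : 0 < massf A a₀ ℓ₀ []) {y : ℝ} (hy0 : 0 ≤ y)
    (hy1 : y < 1) : ∃ x ∈ Xset A a₀ ℓ₀, ffn A a₀ ℓ₀ x = y := by
  classical
  set step : List ℕ → List ℕ := fun p =>
    if h : alive A a₀ ℓ₀ p ∧ offf A a₀ ℓ₀ p ≤ y ∧ y < offf A a₀ ℓ₀ p + wfn A a₀ ℓ₀ p then
      (step_window hℓ hm0 h.1 h.2.1 h.2.2).choose :: p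
    else [] with hstep
  set σ : ℕ → List ℕ := fun k => Nat.rec [] (fun _ q => step q) k with hσ
  have hσs : ∀ k, σ (k+1) = step (σ k) := fun k => rfl
  have hinv : ∀ k, (σ k).length = k ∧ alive A a₀ ℓ₀ (σ k) ∧
      offf A a₀ ℓ₀ (σ k) ≤ y ∧ y < offf A a₀ ℓ₀ (σ k) + wfn A a₀ ℓ₀ (σ k) := by
    intro k
    induction k with
    | zero =>
      refine ⟨rfl, trivial, ?_, ?_⟩
      · rw [show σ 0 = [] from rfl, offf_nil]; exact hy0
      · rw [show σ 0 = [] from rfl, offf_nil, wfn_nil]; linarith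
    | succ k ih =>
      obtain ⟨hlen, hal, ho1, ho2⟩ := ih
      have hcond : alive A a₀ ℓ₀ (σ k) ∧ offf A a₀ ℓ₀ (σ k) ≤ y ∧
          y < offf A a₀ ℓ₀ (σ k) + wfn A a₀ ℓ₀ (σ k) := ⟨hal, ho1, ho2⟩
      have hσk : σ (k+1) = (step_window hℓ hm0 hcond.1 hcond.2.1 hcond.2.2).choose :: σ k := by
        rw [hσs, hstep]
        simp only [dif_pos hcond]
      obtain ⟨hmem, hw1, hw2⟩ := (step_window hℓ hm0 hcond.1 hcond.2.1 hcond.2.2).choose_spec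
      rw [hσk]
      exact ⟨by simp [hlen], ⟨hmem, hal⟩, hw1, hw2⟩
  have hcoh : ∀ k, ∃ i, i ∈ chosen A a₀ ℓ₀ (σ k) ∧ σ (k+1) = i :: σ k := by
    intro k
    obtain ⟨hlen, hal, ho1, ho2⟩ := hinv k
    have hcond : alive A a₀ ℓ₀ (σ k) ∧ offf A a₀ ℓ₀ (σ k) ≤ y ∧
        y < offf A a₀ ℓ₀ (σ k) + wfn A a₀ ℓ₀ (σ k) := ⟨hal, ho1, ho2⟩
    refine ⟨(step_window hℓ hm0 hcond.1 hcond.2.1 hcond.2.2).choose,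
      (step_window hℓ hm0 hcond.1 hcond.2.1 hcond.2.2).choose_spec.1, ?_⟩
    rw [hσs, hstep]
    simp only [dif_pos hcond]
  have hmonoL : Monotone fun k => leftEnd a₀ ℓ₀ (σ k) := by
    apply monotone_nat_of_le_succ
    intro k
    obtain ⟨i, hi, he⟩ := hcoh k
    rw [he, leftEnd_cons]
    have h2 : 0 ≤ (i:ℝ) * cellLen ℓ₀ ((σ k).length + 1) := by
      have := cellLen_pos hℓ ((σ k).length + 1)
      positivity
    linarith
  have hnest : ∀ k l, k ≤ l → Jset a₀ ℓ₀ (σ l) ⊆ Jset a₀ ℓ₀ (σ k) := by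
    intro k l hkl
    induction l, hkl using Nat.le_induction with
    | base => exact subset_rfl
    | succ l hkl ih =>
      obtain ⟨i, hi, he⟩ := hcoh l
      refine subset_trans ?_ ih
      rw [he]
      exact Jset_cons_subset hℓ (chosen_lt hi) (σ l)
  have hLmem : ∀ k, leftEnd a₀ ℓ₀ (σ k) ∈ Jset a₀ ℓ₀ (σ k) := by
    intro k
    exact ⟨le_rfl, by linarith [cellLen_pos hℓ (σ k).length]⟩
  have hbddL : BddAbove (Set.range fun k => leftEnd a₀ ℓ₀ (σ k)) := by
    refine ⟨a₀ + ℓ₀, ?_⟩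
    rintro z ⟨k, rfl⟩
    have h1 := Jset_sub_root hℓ (hinv k).2.1 (hLmem k)
    have h2 := h1.2
    rw [List.length_nil, cellLen_zero] at h2
    exact h2
  set x := ⨆ k, leftEnd a₀ ℓ₀ (σ k) with hxdef
  have hxk : ∀ k, x ∈ Jset a₀ ℓ₀ (σ k) := by
    intro k
    constructor
    · exact le_ciSup hbddL k
    · rw [hxdef]
      apply ciSup_le
      intro k'
      rcases le_total k' k with h | h
      · have h1 := hmonoL h
        have := cellLen_pos hℓ (σ k).length
        simp only at h1
        linarith
      · have h1 := hnest k k' h (hLmem k')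
        exact h1.2
  have hxX : x ∈ Xset A a₀ ℓ₀ := fun k => ⟨σ k, (hinv k).1, (hinv k).2.1, hxk k⟩
  refine ⟨x, hxX, ?_⟩
  by_contra hne
  have hpos : 0 < |ffn A a₀ ℓ₀ x - y| := abs_pos.mpr (sub_ne_zero.mpr hne)
  obtain ⟨k, hk⟩ := exists_div_pow_lt (ℓ₀ / massf A a₀ ℓ₀ []) hpos
  have hval : |ffn A a₀ ℓ₀ x - y| ≤ wfn A a₀ ℓ₀ (σ k) := by
    obtain ⟨h1, h2⟩ := ffn_mem hℓ hm0 hxX (hinv k).2.1 (hxk k)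
    obtain ⟨-, -, ho1, ho2⟩ := hinv k
    rw [abs_le]
    constructor <;> linarith
  have hwle := wfn_le' hℓ hm0 (hinv k).2.1
  rw [(hinv k).1] at hwle
  have heq : ℓ₀ / (massf A a₀ ℓ₀ [] * 256 ^ k) = ℓ₀ / massf A a₀ ℓ₀ [] / 256 ^ k := by
    rw [div_div]
  rw [heq] at hwle
  linarith


lemma dimH_Ico : (1 : ℝ≥0∞) ≤ dimH (Set.Ico (0:ℝ) 1) := by
  have hμ : (μH[(1:ℝ)] : Measure ℝ) (Set.Ico (0:ℝ) 1) ≠ 0 := by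
    rw [MeasureTheory.hausdorffMeasure_real, Real.volume_Ico]
    norm_num
  have := le_dimH_of_hausdorffMeasure_ne_zero (d := (1:ℝ≥0)) (s := Set.Ico (0:ℝ) 1) (by
    rw [show ((1:ℝ≥0):ℝ) = (1:ℝ) by norm_num]
    exact hμ)
  simpa using this

lemma dimH_Xset (hℓ : 0 < ℓ₀) (hm0 : 0 < massf A a₀ ℓ₀ []) :
    ENNReal.ofReal (1/2) ≤ dimH (Xset A a₀ ℓ₀) := by
  set C₀ := 256 * ℓ₀ / (massf A a₀ ℓ₀ [] * Real.sqrt (2 * ℓ₀)) with hC₀def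
  have hC₀ : 0 ≤ C₀ := by positivity
  have hhold : HolderOnWith C₀.toNNReal (1/2 : ℝ≥0) (ffn A a₀ ℓ₀) (Xset A a₀ ℓ₀) := by
    intro x hx y hy
    rw [edist_dist, edist_dist, Real.dist_eq, Real.dist_eq]
    have hd := ffn_dist hℓ hm0 hx hy
    calc ENNReal.ofReal |ffn A a₀ ℓ₀ x - ffn A a₀ ℓ₀ y|
        ≤ ENNReal.ofReal (C₀ * Real.sqrt |x - y|) := ENNReal.ofReal_le_ofReal hd
    _ = ENNReal.ofReal C₀ * ENNReal.ofReal (Real.sqrt |x - y|) := ENNReal.ofReal_mul hC₀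
    _ = ↑C₀.toNNReal * ENNReal.ofReal |x - y| ^ ((1/2 : ℝ≥0) : ℝ) := by
        congr 1
        rw [Real.sqrt_eq_rpow, ← ENNReal.ofReal_rpow_of_nonneg (abs_nonneg _) (by norm_num)]
        norm_num
  have h1 : Set.Ico (0:ℝ) 1 ⊆ ffn A a₀ ℓ₀ '' Xset A a₀ ℓ₀ := by
    rintro y ⟨hy0, hy1⟩
    obtain ⟨x, hx, hfx⟩ := ffn_surj hℓ hm0 hy0 hy1
    exact ⟨x, hx, hfx⟩
  have h2 : (1 : ℝ≥0∞) ≤ dimH (ffn A a₀ ℓ₀ '' Xset A a₀ ℓ₀) :=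
    le_trans dimH_Ico (dimH_mono h1)
  have h3 := hhold.dimH_image_le (by norm_num : (0:ℝ≥0) < 1/2)
  have h4 : (1 : ℝ≥0∞) ≤ dimH (Xset A a₀ ℓ₀) / ((1/2 : ℝ≥0) : ℝ≥0∞) := le_trans h2 h3
  have hne0 : ((1/2 : ℝ≥0) : ℝ≥0∞) ≠ 0 := by simp
  have hnetop : ((1/2 : ℝ≥0) : ℝ≥0∞) ≠ ⊤ := ENNReal.coe_ne_top
  have h5 := (ENNReal.le_div_iff_mul_le (Or.inl hne0) (Or.inl hnetop)).mp h4
  rw [one_mul] at h5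
  have hhalf : ENNReal.ofReal (1/2 : ℝ) = ((1/2 : ℝ≥0) : ℝ≥0∞) := by
    rw [ENNReal.ofReal]
    congr 1
    rw [Real.toNNReal_div (by norm_num)]
    simp
  rw [hhalf]
  exact h5


section Iso

variable {E : Type*} [NormedAddCommGroup E] [InnerProductSpace ℝ E]

local notation "⟪" x ", " y "⟫" => @inner ℝ _ _ x y

set_option maxHeartbeats 2000000 in
lemma no_isosceles (hℓ : 0 < ℓ₀) (hm0 : 0 < massf A a₀ ℓ₀ []) {φ : ℝ → E} {v : E} {η ρ : ℝ}
    (hρ : ℓ₀ ≤ ρ) (hη : 0 ≤ η)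
    (hinc : ∀ a ∈ A, ∀ z : ℝ, |z - a| ≤ ρ → ‖φ z - φ a - (z - a) • v‖ ≤ η * |z - a|)
    (hsmall : 2 * 65536^2 * η * (2 * ‖v‖ + 65536 * η) < 1)
    {t₁ t₂ t₃ : ℝ} (h1 : t₁ ∈ Xset A a₀ ℓ₀) (h2 : t₂ ∈ Xset A a₀ ℓ₀)
    (h3 : t₃ ∈ Xset A a₀ ℓ₀) (h12 : t₁ ≠ t₂) (h13 : t₁ ≠ t₃)
    (heq : (t₃ - t₁)^2 + ‖φ t₃ - φ t₁‖^2 = (t₃ - t₂)^2 + ‖φ t₃ - φ t₂‖^2) : False := by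
  obtain ⟨p, hal, a, b, c, ha, hb, hc, hnabc, hJ1, hJ2, hJ3⟩ := exists_sep3 hℓ h1 h2 h3 h12
  have hu := cellLen_pos hℓ (p.length + 1)
  have hmarg := margin hℓ ha hb hc hnabc hJ1 hJ2 hJ3
  have h1J : t₁ ∈ Jset a₀ ℓ₀ p := Jset_cons_subset hℓ (chosen_lt ha) p hJ1
  have h2J : t₂ ∈ Jset a₀ ℓ₀ p := Jset_cons_subset hℓ (chosen_lt hb) p hJ2
  have h3J : t₃ ∈ Jset a₀ ℓ₀ p := Jset_cons_subset hℓ (chosen_lt hc) p hJ3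
  have hd1 : |t₃ - t₁| ≤ cellLen ℓ₀ p.length := Jset_diam h3J h1J
  have hd2 : |t₃ - t₂| ≤ cellLen ℓ₀ p.length := Jset_diam h3J h2J
  have hcl : cellLen ℓ₀ p.length = 65536 * cellLen ℓ₀ (p.length + 1) := cellLen_succ' ℓ₀ _
  have hD : |t₃ - t₁| + |t₃ - t₂| ≤ 131072 * cellLen ℓ₀ (p.length + 1) := by
    rw [hcl] at hd1 hd2
    linarith
  set N := 65536 * η with hNdef
  have hNnn : 0 ≤ N := by positivity
  set ε₁ := φ t₃ - φ t₁ - (t₃ - t₁) • v with hε₁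
  set ε₂ := φ t₃ - φ t₂ - (t₃ - t₂) • v with hε₂
  set e₁ := φ t₂ - φ t₁ - (t₂ - t₁) • v with he₁
  have hn1 : ‖ε₁‖ ≤ N * |t₃ - t₁| := secant hℓ hm0 hρ hη hinc h3 h1
  have hn2 : ‖ε₂‖ ≤ N * |t₃ - t₂| := secant hℓ hm0 hρ hη hinc h3 h2
  have hne1 : ‖e₁‖ ≤ N * |t₂ - t₁| := secant hℓ hm0 hρ hη hinc h2 h1
  have he1eq : e₁ = ε₁ - ε₂ := by
    rw [he₁, hε₁, hε₂, sub_smul, sub_smul, sub_smul]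
    abel
  set e₂ := ε₁ + ε₂ with he₂
  have hn3 : ‖e₂‖ ≤ N * (|t₃ - t₁| + |t₃ - t₂|) := by
    calc ‖e₂‖ ≤ ‖ε₁‖ + ‖ε₂‖ := norm_add_le _ _
    _ ≤ N * (|t₃ - t₁| + |t₃ - t₂|) := by rw [mul_add]; exact add_le_add hn1 hn2
  have hexp : ∀ (s : ℝ) (ε : E), ‖s • v + ε‖^2 = s^2 * ‖v‖^2 + 2 * (s * ⟪v, ε⟫) + ‖ε‖^2 := by
    intro s ε
    rw [norm_add_sq_real, norm_smul, real_inner_smul_left, Real.norm_eq_abs, mul_pow, sq_abs]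
    try ring
  have hφ1 : φ t₃ - φ t₁ = (t₃ - t₁) • v + ε₁ := by rw [hε₁]; abel
  have hφ2 : φ t₃ - φ t₂ = (t₃ - t₂) • v + ε₂ := by rw [hε₂]; abel
  rw [hφ1, hφ2, hexp, hexp] at heq
  have hI1 : ⟪v, e₁⟫ = ⟪v, ε₁⟫ - ⟪v, ε₂⟫ := by rw [he1eq, inner_sub_right]
  have hI2 : ⟪v, e₂⟫ = ⟪v, ε₁⟫ + ⟪v, ε₂⟫ := by rw [he₂, inner_add_right]
  have hE : ⟪e₁, e₂⟫ = ‖ε₁‖^2 - ‖ε₂‖^2 := by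
    rw [he1eq, he₂, inner_sub_left, inner_add_right, inner_add_right,
      real_inner_self_eq_norm_sq, real_inner_self_eq_norm_sq, real_inner_comm ε₂ ε₁]
    ring
  have hkey : (t₂ - t₁) * (t₁ + t₂ - 2*t₃) * (1 + ‖v‖^2) =
      -((t₁ + t₂ - 2*t₃) * ⟪v, e₁⟫) + (t₂ - t₁) * ⟪v, e₂⟫ + ⟪e₁, e₂⟫ := by
    rw [hI1, hI2, hE]
    linear_combination (-1 : ℝ) * heq
  set d := |t₂ - t₁| with hd
  set d1 := |t₃ - t₁| with hd1'
  set d2 := |t₃ - t₂| with hd2'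
  set T := |t₁ + t₂ - 2*t₃| with hT
  set V := ‖v‖ with hV
  have hdpos : 0 < d := abs_pos.mpr (sub_ne_zero.mpr fun h => h12 h.symm)
  have hDpos : 0 < d1 + d2 := by
    have h1' : 0 < d1 := abs_pos.mpr (sub_ne_zero.mpr fun h => h13 h.symm)
    have h2' : 0 ≤ d2 := abs_nonneg _
    linarith
  have hSle : T ≤ d1 + d2 := by
    have hrw : t₁ + t₂ - 2*t₃ = -((t₃ - t₁) + (t₃ - t₂)) := by ring
    rw [hT, hrw, abs_neg]
    exact abs_add_le _ _
  have hVnn : (0:ℝ) ≤ V := norm_nonneg v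
  have hb1 : |(t₁ + t₂ - 2*t₃) * ⟪v, e₁⟫| ≤ (d1 + d2) * (V * (N * d)) := by
    rw [abs_mul]
    apply mul_le_mul hSle _ (abs_nonneg _) (by positivity)
    calc |⟪v, e₁⟫| ≤ ‖v‖ * ‖e₁‖ := abs_real_inner_le_norm v e₁
    _ ≤ V * (N * d) := mul_le_mul_of_nonneg_left hne1 hVnn
  have hb2 : |(t₂ - t₁) * ⟪v, e₂⟫| ≤ d * (V * (N * (d1 + d2))) := by
    rw [abs_mul]
    apply mul_le_mul le_rfl _ (abs_nonneg _) (abs_nonneg _)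
    calc |⟪v, e₂⟫| ≤ ‖v‖ * ‖e₂‖ := abs_real_inner_le_norm v e₂
    _ ≤ V * (N * (d1 + d2)) := mul_le_mul_of_nonneg_left hn3 hVnn
  have hb3 : |⟪e₁, e₂⟫| ≤ (N * d) * (N * (d1 + d2)) := by
    calc |⟪e₁, e₂⟫| ≤ ‖e₁‖ * ‖e₂‖ := abs_real_inner_le_norm e₁ e₂
    _ ≤ _ := mul_le_mul hne1 hn3 (norm_nonneg _) (by positivity)
  have hLHS : |(t₂ - t₁) * (t₁ + t₂ - 2*t₃) * (1 + ‖v‖^2)| = d * T * (1 + V^2) := by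
    rw [abs_mul, abs_mul, abs_of_pos (by positivity : (0:ℝ) < 1 + ‖v‖^2)]
  have habs : d * T * (1 + V^2) ≤
      (d1 + d2) * (V * (N * d)) + d * (V * (N * (d1 + d2))) + (N * d) * (N * (d1 + d2)) := by
    rw [← hLHS, hkey]
    calc |(-((t₁ + t₂ - 2*t₃) * ⟪v, e₁⟫) + (t₂ - t₁) * ⟪v, e₂⟫ + ⟪e₁, e₂⟫)| ≤
        |(-((t₁ + t₂ - 2*t₃) * ⟪v, e₁⟫) + (t₂ - t₁) * ⟪v, e₂⟫)| + |⟪e₁, e₂⟫| := abs_add_le _ _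
    _ ≤ |(-((t₁ + t₂ - 2*t₃) * ⟪v, e₁⟫))| + |(t₂ - t₁) * ⟪v, e₂⟫| + |⟪e₁, e₂⟫| := by
        have := abs_add_le (-((t₁ + t₂ - 2*t₃) * ⟪v, e₁⟫)) ((t₂ - t₁) * ⟪v, e₂⟫)
        linarith
    _ ≤ _ := by
        rw [abs_neg]
        linarith [hb1, hb2, hb3]
  have hTle : d * T ≤ d * T * (1 + V^2) := by
    nlinarith [mul_nonneg (mul_nonneg (abs_nonneg (t₂ - t₁)) (abs_nonneg (t₁ + t₂ - 2*t₃)))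
      (sq_nonneg V)]
  have hRHSeq : (d1 + d2) * (V * (N * d)) + d * (V * (N * (d1 + d2))) +
      (N * d) * (N * (d1 + d2)) = d * (N * (d1 + d2) * (2 * V + N)) := by ring
  have hS2 : T ≤ N * (d1 + d2) * (2 * V + N) := by
    have hstep : d * T ≤ d * (N * (d1 + d2) * (2 * V + N)) := by
      rw [← hRHSeq]
      linarith
    exact le_of_mul_le_mul_left hstep hdpos
  have hmarg2 : d1 + d2 ≤ 131072 * T := by
    have h1' : cellLen ℓ₀ (p.length + 1) ≤ T := hmarg
    linarith
  have hcomb : d1 + d2 ≤ 131072 * (N * (d1 + d2) * (2 * V + N)) := by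
    have := mul_le_mul_of_nonneg_left hS2 (by norm_num : (0:ℝ) ≤ 131072)
    linarith
  have heq2 : 131072 * ((65536 * η) * (d1 + d2) * (2 * V + 65536 * η)) =
      (2 * 65536^2 * η * (2 * V + 65536 * η)) * (d1 + d2) := by ring
  rw [hNdef] at hcomb
  rw [heq2] at hcomb
  have hlt := mul_lt_mul_of_pos_right hsmall hDpos
  rw [one_mul] at hlt
  rw [hNdef] at hlt
  linarith

end Iso


/-! ### Analytic setup -/

section Main

def clampI (t : ℝ) : ℝ := max 0 (min 1 t)

lemma clampI_mem (t : ℝ) : clampI t ∈ Icc (0:ℝ) 1 := by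
  constructor
  · exact le_max_left _ _
  · exact max_le (by norm_num) (min_le_left _ _)

lemma clampI_eq {t : ℝ} (h : t ∈ Icc (0:ℝ) 1) : clampI t = t := by
  obtain ⟨h1, h2⟩ := h
  rw [clampI, min_eq_right h2, max_eq_right h1]

lemma clampI_lip (s t : ℝ) : |clampI s - clampI t| ≤ |s - t| := by
  rw [clampI, clampI]
  have h1 := abs_max_sub_max_le_max (0:ℝ) (min 1 s) 0 (min 1 t)
  have h2 := abs_min_sub_min_le_max (1:ℝ) s 1 t
  simp only [sub_self, abs_zero] at h1 h2
  have h3 : max 0 |min 1 s - min 1 t| = |min 1 s - min 1 t| :=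
    max_eq_right (abs_nonneg _)
  have h4 : max 0 |s - t| = |s - t| := max_eq_right (abs_nonneg _)
  rw [h3] at h1
  rw [h4] at h2
  exact le_trans h1 h2

variable {m : ℕ}

lemma phi_lip {g : ℝ → EuclideanSpace ℝ (Fin m)} {K : NNReal}
    (hg : LipschitzOnWith K g (Set.Icc 0 1)) :
    LipschitzWith K (fun t => g (clampI t)) := by
  apply LipschitzWith.of_dist_le_mul
  intro s t
  calc dist (g (clampI s)) (g (clampI t)) ≤ K * dist (clampI s) (clampI t) :=
    LipschitzOnWith.dist_le_mul hg _ (clampI_mem s) _ (clampI_mem t)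
  _ ≤ K * dist s t := by
      apply mul_le_mul_of_nonneg_left _ (NNReal.coe_nonneg K)
      rw [Real.dist_eq, Real.dist_eq]
      exact clampI_lip s t

set_option maxHeartbeats 1000000 in
lemma exists_v_A {g : ℝ → EuclideanSpace ℝ (Fin m)} {K : NNReal}
    (hg : LipschitzOnWith K g (Set.Icc 0 1)) {η : ℝ} (hη : 0 < η) (hη1 : η ≤ 1) :
    ∃ v : EuclideanSpace ℝ (Fin m), ‖v‖ ≤ (K:ℝ) + 1 ∧
      ∃ A : Set ℝ, A ⊆ Icc 0 1 ∧ volume A ≠ 0 ∧ ∃ ρ : ℝ, 0 < ρ ∧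
        ∀ a ∈ A, ∀ z : ℝ, |z - a| ≤ ρ →
          ‖g (clampI z) - g (clampI a) - (z - a) • v‖ ≤ η * |z - a| := by
  classical
  set φ : ℝ → EuclideanSpace ℝ (Fin m) := fun t => g (clampI t) with hφ
  have hlip : LipschitzWith K φ := phi_lip hg
  have hdiff : ∀ᵐ x : ℝ, DifferentiableAt ℝ φ x := hlip.ae_differentiableAt
  obtain ⟨T, hTc, hTd⟩ := TopologicalSpace.exists_countable_dense (EuclideanSpace ℝ (Fin m))
  set Eq : EuclideanSpace ℝ (Fin m) → Set ℝ := fun q =>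
    {x | x ∈ Ioo (0:ℝ) 1 ∧ DifferentiableAt ℝ φ x ∧ dist (deriv φ x) q < η/2} with hEq
  have hcover : {x | x ∈ Ioo (0:ℝ) 1 ∧ DifferentiableAt ℝ φ x} ⊆ ⋃ q ∈ T, Eq q := by
    rintro x ⟨hx1, hx2⟩
    obtain ⟨q, hq⟩ := Metric.dense_iff.mp hTd (deriv φ x) (η/2) (by linarith)
    obtain ⟨hqball, hqT⟩ := hq
    refine Set.mem_biUnion hqT ⟨hx1, hx2, ?_⟩
    rw [dist_comm]
    exact Metric.mem_ball.mp hqball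
  have hvolIoo : volume {x | x ∈ Ioo (0:ℝ) 1 ∧ DifferentiableAt ℝ φ x} ≠ 0 := by
    intro h0
    have hnull : volume {x : ℝ | ¬ DifferentiableAt ℝ φ x} = 0 :=
      MeasureTheory.ae_iff.mp hdiff
    have h1 : volume (Ioo (0:ℝ) 1) ≤
        volume {x | x ∈ Ioo (0:ℝ) 1 ∧ DifferentiableAt ℝ φ x} +
          volume {x : ℝ | ¬ DifferentiableAt ℝ φ x} := by
      apply le_trans (measure_mono ?_) (measure_union_le _ _)
      intro x hx
      by_cases hd : DifferentiableAt ℝ φ x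
      · exact Or.inl ⟨hx, hd⟩
      · exact Or.inr hd
    rw [h0, hnull, add_zero, Real.volume_Ioo] at h1
    simp at h1
  -- pigeonhole over the countable dense set
  have hq : ∃ q ∈ T, volume (Eq q) ≠ 0 := by
    by_contra hcon
    push_neg at hcon
    have h0 : volume (⋃ q ∈ T, Eq q) = 0 := by
      rw [measure_biUnion_null_iff hTc]
      exact hcon
    exact hvolIoo (measure_mono_null hcover h0)
  obtain ⟨v, hvT, hvvol⟩ := hq
  -- norm bound on v
  obtain ⟨x₀, hx₀⟩ := nonempty_of_measure_ne_zero hvvol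
  obtain ⟨hx₀1, hx₀2, hx₀3⟩ := hx₀
  have hderiv_le : ‖deriv φ x₀‖ ≤ (K:ℝ) := by
    have h := hx₀2.hasDerivAt.hasFDerivAt.le_of_lipschitz hlip
    calc ‖deriv φ x₀‖ = ‖ContinuousLinearMap.smulRight (1 : ℝ →L[ℝ] ℝ) (deriv φ x₀)‖ := by
          rw [ContinuousLinearMap.norm_smulRight_apply, norm_one, one_mul]
    _ ≤ (K:ℝ) := h
  have hvnorm : ‖v‖ ≤ (K:ℝ) + 1 := by
    have h1 : ‖v‖ ≤ ‖deriv φ x₀‖ + dist (deriv φ x₀) v := by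
      rw [dist_eq_norm]
      have := norm_le_norm_add_norm_sub (deriv φ x₀) v
      linarith [this]
    linarith
  refine ⟨v, hvnorm, ?_⟩
  -- the uniform differentiability sets
  set An : ℕ → Set ℝ := fun n =>
    {a | a ∈ Icc (0:ℝ) 1 ∧ ∀ h : ℝ, |h| ≤ 1/(n+1) → ‖φ (a+h) - φ a - h • v‖ ≤ η * |h|}
    with hAn
  have hsub : Eq v ⊆ ⋃ n, An n := by
    rintro a ⟨ha1, ha2, ha3⟩
    have hder := ha2.hasDerivAt
    have hlittle := hasDerivAt_iff_isLittleO.mp hder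
    have hev := (Asymptotics.isLittleO_iff.mp hlittle) (by linarith : (0:ℝ) < η/2)
    rw [Metric.eventually_nhds_iff] at hev
    obtain ⟨δ, hδ, hball⟩ := hev
    obtain ⟨n, hn⟩ := exists_nat_one_div_lt hδ
    refine Set.mem_iUnion.mpr ⟨n, ⟨Ioo_subset_Icc_self ha1, ?_⟩⟩
    intro h hh
    by_cases hh0 : h = 0
    · subst hh0
      simp
    have hdist : dist (a + h) a < δ := by
      rw [Real.dist_eq]
      have : |a + h - a| = |h| := by ring_nf
      rw [this]
      calc |h| ≤ 1/(n+1) := hh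
      _ < δ := by exact_mod_cast hn
    have hb := hball hdist
    simp only [add_sub_cancel_left] at hb
    have hb2 : ‖φ (a+h) - φ a - h • deriv φ a‖ ≤ η/2 * |h| := by
      calc ‖φ (a+h) - φ a - h • deriv φ a‖ ≤ η/2 * ‖h‖ := hb
      _ = η/2 * |h| := by rw [Real.norm_eq_abs]
    have hb3 : ‖h • deriv φ a - h • v‖ ≤ |h| * (η/2) := by
      rw [← smul_sub, norm_smul, Real.norm_eq_abs]
      apply mul_le_mul_of_nonneg_left _ (abs_nonneg h)
      rw [← dist_eq_norm]
      exact le_of_lt ha3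
    calc ‖φ (a+h) - φ a - h • v‖
        = ‖(φ (a+h) - φ a - h • deriv φ a) + (h • deriv φ a - h • v)‖ := by
          congr 1
          abel
    _ ≤ ‖φ (a+h) - φ a - h • deriv φ a‖ + ‖h • deriv φ a - h • v‖ := norm_add_le _ _
    _ ≤ η/2 * |h| + |h| * (η/2) := add_le_add hb2 hb3
    _ = η * |h| := by ring
  have hAnvol : ∃ n, volume (An n) ≠ 0 := by
    by_contra hcon
    push_neg at hcon
    have h0 : volume (⋃ n, An n) = 0 := by
      rw [measure_iUnion_null_iff]
      exact hcon
    exact hvvol (measure_mono_null hsub h0)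
  obtain ⟨n, hnvol⟩ := hAnvol
  refine ⟨An n, fun a ha => ha.1, hnvol, 1/(n+1), by positivity, ?_⟩
  intro a ha z hz
  have := ha.2 (z - a) hz
  rw [show a + (z - a) = z by ring] at this
  exact this

end Main



section Root

lemma exists_root {A : Set ℝ} (hA : A ⊆ Icc 0 1) (hvol : volume A ≠ 0) {ℓ : ℝ}
    (h0 : 0 < ℓ) (h1 : ℓ ≤ 1) :
    ∃ a₀, Icc a₀ (a₀ + ℓ) ⊆ Icc 0 1 ∧ volume (A ∩ Icc a₀ (a₀ + ℓ)) ≠ 0 := by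
  classical
  set n : ℕ := ⌈1/ℓ⌉₊ with hn
  have hnpos : 0 < n := Nat.ceil_pos.mpr (by positivity)
  have hcov : A ⊆ ⋃ j ∈ Finset.range n, Icc ((j:ℝ) * ℓ) ((j:ℝ) * ℓ + ℓ) := by
    intro x hx
    obtain ⟨hx0, hx1⟩ := hA hx
    have ht0 : 0 ≤ x / ℓ := by positivity
    set j : ℕ := min ⌊x / ℓ⌋₊ (n - 1) with hj
    have hjlt : j < n := by
      have : j ≤ n - 1 := min_le_right _ _
      omega
    refine Set.mem_biUnion (Finset.mem_range.mpr hjlt) ?_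
    by_cases hcase : ⌊x / ℓ⌋₊ ≤ n - 1
    · have hjeq : j = ⌊x / ℓ⌋₊ := by omega
      have hlow : (j : ℝ) ≤ x / ℓ := by rw [hjeq]; exact Nat.floor_le ht0
      have hhigh : x / ℓ < j + 1 := by rw [hjeq]; exact Nat.lt_floor_add_one _
      constructor
      · have := (le_div_iff₀ h0).mp hlow
        linarith
      · have := (div_lt_iff₀ h0).mp hhigh
        nlinarith
    · have hjeq : j = n - 1 := by omega
      constructor
      · rw [hjeq]
        have hle : ((n:ℝ) - 1) * ℓ ≤ x := by
          have h2 : (n:ℝ) - 1 < 1/ℓ := by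
            have := Nat.ceil_lt_add_one (by positivity : (0:ℝ) ≤ 1/ℓ)
            have h3 : (n:ℝ) ≤ 1/ℓ + 1 → (n:ℝ) - 1 ≤ 1/ℓ := by intro; linarith
            -- use Nat.sub_one_lt_iff? simpler: n - 1 < n ≤ ceil < 1/ℓ + 1
            have h4 : ((n:ℝ)) < 1/ℓ + 1 := by
              exact_mod_cast Nat.ceil_lt_add_one (by positivity : (0:ℝ) ≤ 1/ℓ)
            linarith
          have h5 : ((n:ℝ) - 1) * ℓ < 1 := by
            have := mul_lt_mul_of_pos_right h2 h0
            rw [div_mul_cancel₀] at this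
            · linarith
            · exact ne_of_gt h0
          -- x ≥ (n-1)ℓ since floor(x/ℓ) ≥ n-1+1 > n-1
          have h6 : (n : ℝ) - 1 ≤ x / ℓ := by
            have h7 : (n - 1 : ℕ) < ⌊x / ℓ⌋₊ := by omega
            have h8 : ((n - 1 : ℕ) : ℝ) ≤ x / ℓ := by
              calc ((n - 1 : ℕ) : ℝ) ≤ (⌊x / ℓ⌋₊ : ℝ) := by exact_mod_cast le_of_lt h7
              _ ≤ x / ℓ := Nat.floor_le ht0
            have h9 : ((n - 1 : ℕ) : ℝ) = (n : ℝ) - 1 := by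
              have : (1:ℕ) ≤ n := hnpos
              push_cast [Nat.cast_sub this]
              ring
            rw [h9] at h8
            exact h8
          have h10 := (le_div_iff₀ h0).mp h6
          linarith
        have h9 : ((n - 1 : ℕ) : ℝ) = (n : ℝ) - 1 := by
          have h11 : (1:ℕ) ≤ n := hnpos
          push_cast [Nat.cast_sub h11]
          ring
        rw [h9]
        exact hle
      · rw [hjeq]
        have h9 : ((n - 1 : ℕ) : ℝ) = (n : ℝ) - 1 := by
          have : (1:ℕ) ≤ n := hnpos
          push_cast [Nat.cast_sub this]
          ring
        rw [h9]
        have h2 : 1 ≤ (n:ℝ) * ℓ := by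
          have h3 : 1/ℓ ≤ (n:ℝ) := Nat.le_ceil _
          have := mul_le_mul_of_nonneg_right h3 (le_of_lt h0)
          rw [div_mul_cancel₀] at this
          · linarith
          · exact ne_of_gt h0
        nlinarith
  have hex : ∃ j ∈ Finset.range n, volume (A ∩ Icc ((j:ℝ) * ℓ) ((j:ℝ) * ℓ + ℓ)) ≠ 0 := by
    by_contra hcon
    push_neg at hcon
    have h2 : A ⊆ ⋃ j ∈ Finset.range n, A ∩ Icc ((j:ℝ) * ℓ) ((j:ℝ) * ℓ + ℓ) := by
      intro x hx
      obtain ⟨s, ⟨j, rfl⟩, hs⟩ := hcov hx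
      simp only [Set.mem_iUnion, exists_prop] at hs ⊢
      obtain ⟨hj, hxs⟩ := hs
      exact ⟨j, hj, hx, hxs⟩
    have h3 : volume (⋃ j ∈ Finset.range n, A ∩ Icc ((j:ℝ) * ℓ) ((j:ℝ) * ℓ + ℓ)) = 0 := by
      apply le_antisymm _ (zero_le)
      calc volume (⋃ j ∈ Finset.range n, A ∩ Icc ((j:ℝ) * ℓ) ((j:ℝ) * ℓ + ℓ)) ≤
          ∑ j ∈ Finset.range n, volume (A ∩ Icc ((j:ℝ) * ℓ) ((j:ℝ) * ℓ + ℓ)) :=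
            measure_biUnion_finset_le _ _
      _ = 0 := Finset.sum_eq_zero hcon
    exact hvol (measure_mono_null h2 h3)
  obtain ⟨j, hjn, hjvol⟩ := hex
  set a₀ : ℝ := min ((j:ℝ) * ℓ) (1 - ℓ) with ha₀
  refine ⟨a₀, ?_, ?_⟩
  · intro x hx
    obtain ⟨hx1, hx2⟩ := hx
    constructor
    · have h2 : 0 ≤ a₀ := by
        apply le_min
        · positivity
        · linarith
      linarith
    · have h3 : a₀ ≤ 1 - ℓ := min_le_right _ _
      linarith
  · intro hz
    apply hjvol
    apply measure_mono_null _ hz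
    intro x hx
    obtain ⟨hxA, hx1, hx2⟩ := hx
    obtain ⟨hx0', hx1'⟩ := hA hxA
    refine ⟨hxA, ?_, ?_⟩
    · exact le_trans (min_le_left _ _) hx1
    · rcases le_total ((j:ℝ) * ℓ) (1 - ℓ) with hmin | hmin
      · rw [ha₀, min_eq_left hmin]
        linarith
      · rw [ha₀, min_eq_right hmin]
        linarith

end Root


end IsoAux


namespace IsoAux

variable {m : ℕ}

lemma graphPoint_apply_zero (g : ℝ → EuclideanSpace ℝ (Fin m)) (t : ℝ) :
    graphPoint g t 0 = t := by
  rw [graphPoint, WithLp.equiv_symm_apply, PiLp.toLp_apply, Fin.cons_zero]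

lemma graphPoint_apply_succ (g : ℝ → EuclideanSpace ℝ (Fin m)) (t : ℝ) (i : Fin m) :
    graphPoint g t i.succ = g t i := by
  rw [graphPoint, WithLp.equiv_symm_apply, PiLp.toLp_apply, Fin.cons_succ]
  rfl

lemma norm_sq_eucl {n : ℕ} (x : EuclideanSpace ℝ (Fin n)) : ‖x‖^2 = ∑ i, ‖x i‖^2 := by
  rw [EuclideanSpace.norm_eq, Real.sq_sqrt (by positivity)]

lemma graphPoint_norm (g : ℝ → EuclideanSpace ℝ (Fin m)) (s t : ℝ) :
    ‖graphPoint g s - graphPoint g t‖^2 = (s - t)^2 + ‖g s - g t‖^2 := by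
  rw [norm_sq_eucl, Fin.sum_univ_succ]
  congr 1
  · rw [PiLp.sub_apply, graphPoint_apply_zero, graphPoint_apply_zero, Real.norm_eq_abs, sq_abs]
  · rw [norm_sq_eucl]
    apply Finset.sum_congr rfl
    intro i _
    rw [PiLp.sub_apply, graphPoint_apply_succ, graphPoint_apply_succ, PiLp.sub_apply]

end IsoAux

open IsoAux

/-- **Theorem 5.2.** A Lipschitz graph in `ℝ^n` (here `n = m + 1 ≥ 2`) contains a set of
Hausdorff dimension `1/2` with no vertices of an isosceles triangle. -/
theorem lipschitz_graph_isosceles (m : ℕ) (hm : 1 ≤ m)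
    (g : ℝ → EuclideanSpace ℝ (Fin m)) (K : NNReal)
    (hg : LipschitzOnWith K g (Set.Icc 0 1)) :
    ∃ X : Set ℝ, X ⊆ Set.Icc 0 1 ∧
      ENNReal.ofReal (1 / 2) ≤ dimH X ∧
      ∀ t₁ ∈ X, ∀ t₂ ∈ X, ∀ t₃ ∈ X, t₁ ≠ t₂ → t₁ ≠ t₃ → t₂ ≠ t₃ →
        ‖graphPoint g t₃ - graphPoint g t₁‖ ≠ ‖graphPoint g t₃ - graphPoint g t₂‖ := by
  classical
  have hK0 : (0:ℝ) ≤ K := K.coe_nonneg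
  set η : ℝ := (2 * 65536^2 * (2 * ((K:ℝ)+1) + 1) + 65536)⁻¹ with hηdef
  have hD0 : (0:ℝ) < 2 * 65536^2 * (2 * ((K:ℝ)+1) + 1) + 65536 := by positivity
  have hηpos : 0 < η := by rw [hηdef]; positivity
  have hη1 : η ≤ 1 := by
    rw [hηdef]
    rw [inv_le_one₀ hD0]
    nlinarith
  obtain ⟨v, hv, A, hAsub, hAvol, ρ, hρpos, hinc⟩ := exists_v_A hg hηpos hη1
  have h65η : 65536 * η ≤ 1 := by
    rw [hηdef, mul_inv_le_iff₀ hD0]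
    nlinarith
  have hsmall : 2 * 65536^2 * η * (2 * ‖v‖ + 65536 * η) < 1 := by
    have hb : 2 * ‖v‖ + 65536 * η ≤ 2 * ((K:ℝ)+1) + 1 := by linarith
    have hc : 2 * 65536^2 * η * (2 * ((K:ℝ)+1) + 1) < 1 := by
      rw [hηdef]
      rw [show 2 * 65536^2 * (2 * 65536^2 * (2 * ((K:ℝ)+1) + 1) + 65536)⁻¹ *
          (2 * ((K:ℝ)+1) + 1) = (2 * 65536^2 * (2 * ((K:ℝ)+1) + 1)) *
          (2 * 65536^2 * (2 * ((K:ℝ)+1) + 1) + 65536)⁻¹ by ring]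
      rw [← div_eq_mul_inv, div_lt_one hD0]
      linarith
    have hd : 2 * 65536^2 * η * (2 * ‖v‖ + 65536 * η) ≤
        2 * 65536^2 * η * (2 * ((K:ℝ)+1) + 1) := by
      apply mul_le_mul_of_nonneg_left hb
      positivity
    linarith
  set ℓ₀ : ℝ := min ρ 1 with hℓdef
  have hℓpos : 0 < ℓ₀ := lt_min hρpos one_pos
  have hℓρ : ℓ₀ ≤ ρ := min_le_left _ _
  obtain ⟨a₀, hroot, hrootvol⟩ := exists_root hAsub hAvol hℓpos (min_le_right _ _)
  have hm0 : 0 < massf A a₀ ℓ₀ [] := by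
    rw [massf]
    apply ENNReal.toReal_pos
    · rw [Jset, List.length_nil, cellLen_zero]
      exact hrootvol
    · apply ne_of_lt
      apply lt_of_le_of_lt (measure_mono inter_subset_right)
      rw [Jset, Real.volume_Icc]
      exact ENNReal.ofReal_lt_top
  have hXsub : Xset A a₀ ℓ₀ ⊆ Set.Icc 0 1 := by
    intro x hx
    obtain ⟨p, hlen, hal, hmem⟩ := hx 0
    rw [length_zero_eq_nil hlen] at hmem
    rw [Jset, List.length_nil, cellLen_zero] at hmem
    exact hroot hmem
  refine ⟨Xset A a₀ ℓ₀, hXsub, dimH_Xset hℓpos hm0, ?_⟩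
  intro t₁ ht₁ t₂ ht₂ t₃ ht₃ h12 h13 h23 hnorm
  have hφeq : ∀ t ∈ Set.Icc (0:ℝ) 1, g (clampI t) = g t := by
    intro t ht
    rw [clampI_eq ht]
  have hsq : ‖graphPoint g t₃ - graphPoint g t₁‖^2 = ‖graphPoint g t₃ - graphPoint g t₂‖^2 := by
    rw [hnorm]
  rw [graphPoint_norm, graphPoint_norm] at hsq
  have hsq' : (t₃ - t₁)^2 + ‖g (clampI t₃) - g (clampI t₁)‖^2 =
      (t₃ - t₂)^2 + ‖g (clampI t₃) - g (clampI t₂)‖^2 := by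
    rw [hφeq t₁ (hXsub ht₁), hφeq t₂ (hXsub ht₂), hφeq t₃ (hXsub ht₃)]
    exact hsq
  exact no_isosceles (φ := fun t => g (clampI t)) hℓpos hm0 hℓρ (le_of_lt hηpos) hinc
    hsmall ht₁ ht₂ ht₃ h12 h13 hsq'


end
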